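/- arXiv:2311.12937 — 7 statements merged into one kernel-verified Lean document; each statement's English description precedes it below -/
import Mathlib

section
/- The Taylor coefficients g_n(α) of f_α satisfy the recurrence g_{n+2}(α) = (2α g_{n+1}(α) + n g_n(α))/(n+2) for all n ≥ 0, with g_0(α) = 0 and g_1(α) = 1. -/
open Complex Set

/-- The 2-gon mapping `f_α(z) = (((1+z)/(1-z))^α - 1)/(2α)` (principal branch). -/
noncomputable def fgon (α : ℝ) (z : ℂ) : ℂ :=
  (((1 + z) / (1 - z)) ^ (α : ℂ) - 1) / (2 * α)

/-- The `n`-th Taylor coefficient of `f_α` at the origin. -/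
noncomputable def taylorCoeff (α : ℝ) (n : ℕ) : ℂ :=
  iteratedDeriv n (fgon α) 0 / n.factorial

lemma iteratedDerivWithin_of_isOpen' {f : ℂ → ℂ} {s : Set ℂ} {x : ℂ} (n : ℕ)
    (hs : IsOpen s) (hx : x ∈ s) :
    iteratedDerivWithin n f s x = iteratedDeriv n f x := by
  rw [iteratedDerivWithin_eq_iteratedFDerivWithin, iteratedDeriv,
    iteratedFDerivWithin_of_isOpen n hs hx]

lemma one_sub_ne {z : ℂ} (hz : ‖z‖ < 1) : (1 : ℂ) - z ≠ 0 := by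
  intro h
  have : z = 1 := by linear_combination -h
  simp [this] at hz

lemma one_add_ne {z : ℂ} (hz : ‖z‖ < 1) : (1 : ℂ) + z ≠ 0 := by
  intro h
  have : z = -1 := by linear_combination h
  simp [this] at hz

lemma slit_mem {z : ℂ} (hz : ‖z‖ < 1) : (1 + z) / (1 - z) ∈ slitPlane := by
  have h1 := one_sub_ne hz
  have hns : Complex.normSq (1 - z) > 0 := Complex.normSq_pos.2 h1
  left
  rw [Complex.div_re]
  have hz2 : Complex.normSq z < 1 := by
    rw [← Complex.sq_norm]
    have : ‖z‖ < 1 := by simpa using hz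
    nlinarith [norm_nonneg z]
  have key : (1 + z).re * (1 - z).re / normSq (1 - z) +
      (1 + z).im * (1 - z).im / normSq (1 - z) = (1 - Complex.normSq z) / normSq (1 - z) := by
    rw [← add_div]
    congr 1
    simp [Complex.add_re, Complex.sub_re, Complex.add_im, Complex.sub_im, Complex.normSq_apply]
    ring
  rw [key]
  exact div_pos (by linarith) hns

lemma fgon_hasDeriv {α : ℝ} (hα : α ≠ 0) {z : ℂ} (hz : ‖z‖ < 1) :
    HasDerivAt (fgon α) (((1 + z) / (1 - z)) ^ (α : ℂ) / (1 - z ^ 2)) z := by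
  have h1 := one_sub_ne hz
  have h2 := one_add_ne hz
  have hu0 : (1 + z) / (1 - z) ≠ 0 := div_ne_zero h2 h1
  have hdiv : HasDerivAt (fun z : ℂ => (1 + z) / (1 - z)) (2 / (1 - z) ^ 2) z := by
    have := (((hasDerivAt_id z).const_add 1).div ((hasDerivAt_id z).const_sub 1) h1)
    refine this.congr_deriv ?_
    simp only [id]
    ring
  have hcpow := hdiv.cpow_const (c := (α:ℂ)) (slit_mem hz)
  have hf := (hcpow.sub_const 1).div_const (2 * α)
  refine hf.congr_deriv ?_
  rw [show ((α : ℂ) - 1) = (α : ℂ) - 1 from rfl, cpow_sub _ _ hu0, cpow_one]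
  have hα' : (α : ℂ) ≠ 0 := by exact_mod_cast Complex.ofReal_ne_zero.2 hα
  have h12 : (1 : ℂ) - z ^ 2 = (1 - z) * (1 + z) := by ring
  rw [h12]
  field_simp

lemma fgon_ode {α : ℝ} (hα : α ≠ 0) {z : ℂ} (hz : ‖z‖ < 1) :
    (1 - z ^ 2) * deriv (fgon α) z = 1 + 2 * α * fgon α z := by
  have h1 := one_sub_ne hz
  have h2 := one_add_ne hz
  have h12 : (1 : ℂ) - z ^ 2 ≠ 0 := by
    rw [show (1 : ℂ) - z ^ 2 = (1 - z) * (1 + z) by ring]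
    exact mul_ne_zero h1 h2
  have hα' : (α : ℂ) ≠ 0 := Complex.ofReal_ne_zero.2 hα
  rw [(fgon_hasDeriv hα hz).deriv, fgon]
  field_simp
  ring

lemma fgon_analytic {α : ℝ} (hα : α ≠ 0) :
    AnalyticOnNhd ℂ (fgon α) (Metric.ball (0 : ℂ) 1) := by
  intro z hz
  have hz' : ‖z‖ < 1 := by simpa [Metric.mem_ball] using hz
  have h1 := one_sub_ne hz'
  have hbase : AnalyticAt ℂ (fun z : ℂ => (1 + z) / (1 - z)) z :=
    ((analyticAt_const.add analyticAt_id).div (analyticAt_const.sub analyticAt_id) h1)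
  have hpow : AnalyticAt ℂ (fun z : ℂ => ((1 + z) / (1 - z)) ^ (α : ℂ)) z :=
    hbase.cpow analyticAt_const (slit_mem hz')
  exact (hpow.sub analyticAt_const).div analyticAt_const (by
    simpa using mul_ne_zero two_ne_zero (Complex.ofReal_ne_zero.2 hα))

/-- Leibniz rule for multiplying by `z`. -/
lemma iter_mul_id {s : Set ℂ} (hs : IsOpen s) (hus : UniqueDiffOn ℂ s) :
    ∀ (n : ℕ) (h : ℂ → ℂ), AnalyticOnNhd ℂ h s → ∀ x ∈ s,
    iteratedDerivWithin (n + 1) (fun z => z * h z) s x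
      = x * iteratedDerivWithin (n + 1) h s x + (n + 1) * iteratedDerivWithin n h s x := by
  intro n
  induction n with
  | zero =>
    intro h hh x hx
    have hd : DifferentiableAt ℂ h x := (hh x hx).differentiableAt
    rw [iteratedDerivWithin_one,
        iteratedDerivWithin_one,
        iteratedDerivWithin_zero, derivWithin_of_isOpen hs hx, derivWithin_of_isOpen hs hx]
    rw [deriv_fun_mul differentiableAt_fun_id hd]
    simp
    ring
  | succ n IH =>
    intro h hh x hx
    have hh' : AnalyticOnNhd ℂ (deriv h) s := hh.deriv
    have hcongr1 : Set.EqOn (derivWithin (fun z => z * h z) s)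
        (fun z => h z + z * deriv h z) s := by
      intro y hy
      rw [derivWithin_of_isOpen hs hy,
        deriv_fun_mul differentiableAt_fun_id (hh y hy).differentiableAt]
      simp
    have e1 : iteratedDerivWithin (n + 2) (fun z => z * h z) s x
        = iteratedDerivWithin (n + 1) (fun z => h z + z * deriv h z) s x := by
      rw [iteratedDerivWithin_succ']
      exact iteratedDerivWithin_congr hcongr1 hx
    have ha : ContDiffOn ℂ (n + 1 : ℕ) h s := hh.contDiffOn hus
    have hb : ContDiffOn ℂ (n + 1 : ℕ) (fun z => z * deriv h z) s :=
      ((analyticOnNhd_id.mul hh') : AnalyticOnNhd ℂ _ s).contDiffOn hus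
    have e2 : iteratedDerivWithin (n + 1) (fun z => h z + z * deriv h z) s x
        = iteratedDerivWithin (n + 1) h s x
          + iteratedDerivWithin (n + 1) (fun z => z * deriv h z) s x := by
      exact iteratedDerivWithin_add hx hus (ha x hx) (hb x hx)
    have e3 := IH (deriv h) hh' x hx
    have ederiv : ∀ (k : ℕ), ∀ y ∈ s, iteratedDerivWithin k (deriv h) s y
        = iteratedDerivWithin (k + 1) h s y := by
      intro k y hy
      rw [iteratedDerivWithin_succ']
      exact (iteratedDerivWithin_congr
        (fun w hw => (derivWithin_of_isOpen hs hw)) hy).symm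
    rw [e1, e2, e3, ederiv n x hx, ederiv (n+1) x hx]
    push_cast
    ring

lemma iter_deriv_shift {s : Set ℂ} (hs : IsOpen s) (hus : UniqueDiffOn ℂ s)
    {h : ℂ → ℂ} (k : ℕ) {y : ℂ} (hy : y ∈ s) :
    iteratedDerivWithin k (deriv h) s y = iteratedDerivWithin (k + 1) h s y := by
  rw [iteratedDerivWithin_succ']
  exact (iteratedDerivWithin_congr
    (fun w hw => (derivWithin_of_isOpen hs hw)) hy).symm

theorem stmt1 (α : ℝ) (hα : α ∈ Set.Ioo (0:ℝ) 1) :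
    taylorCoeff α 0 = 0 ∧ taylorCoeff α 1 = 1 ∧
    ∀ n : ℕ, taylorCoeff α (n + 2)
      = (2 * α * taylorCoeff α (n + 1) + n * taylorCoeff α n) / (n + 2) := by
  obtain ⟨hα0, hα1⟩ := hα
  have hαne : α ≠ 0 := ne_of_gt hα0
  set s : Set ℂ := Metric.ball (0 : ℂ) 1 with hsdef
  have hs : IsOpen s := Metric.isOpen_ball
  have hus : UniqueDiffOn ℂ s := hs.uniqueDiffOn
  have h0 : (0 : ℂ) ∈ s := by simp [hsdef]
  have hnorm : ∀ z ∈ s, ‖z‖ < 1 := fun z hz => by simpa [hsdef] using hz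
  set f := fgon α with hfdef
  set g := deriv f with hgdef
  have hfa : AnalyticOnNhd ℂ f s := fgon_analytic hαne
  have hga : AnalyticOnNhd ℂ g s := hfa.deriv
  -- coefficient 0
  have c0 : taylorCoeff α 0 = 0 := by
    simp [taylorCoeff, iteratedDeriv_zero, fgon, Complex.one_cpow]
  -- coefficient 1
  have c1 : taylorCoeff α 1 = 1 := by
    have := (fgon_hasDeriv hαne (z := 0) (by simp)).deriv
    simp only [taylorCoeff, iteratedDeriv_one, this]
    norm_num [Complex.one_cpow]
  refine ⟨c0, c1, fun n => ?_⟩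
  -- the functional ODE on s
  have hEq : Set.EqOn (fun z => (1 - z ^ 2) * g z) (fun z => 1 + 2 * α * f z) s :=
    fun z hz => fgon_ode hαne (hnorm z hz)
  -- key derivative identity
  have key : ∀ m : ℕ, iteratedDeriv (m + 2) f 0
      = 2 * α * iteratedDeriv (m + 1) f 0 + (m * (m + 1) : ℂ) * iteratedDeriv m f 0 := by
    intro m
    have E := iteratedDerivWithin_congr hEq h0 (n := m + 1)
    -- RHS simplification
    have ER : iteratedDerivWithin (m + 1) (fun z => 1 + 2 * α * f z) s 0
        = 2 * α * iteratedDerivWithin (m + 1) f s 0 := by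
      rw [iteratedDerivWithin_const_add (Nat.succ_pos m) (1 : ℂ)]
      exact iteratedDerivWithin_const_mul h0 hus (2 * (α : ℂ)) (hfa.contDiffOn hus 0 h0)
    -- LHS simplification
    have hfun : (fun z : ℂ => (1 - z ^ 2) * g z)
        = fun z => g z - z * (z * g z) := by funext z; ring
    have hzg : AnalyticOnNhd ℂ (fun z => z * g z) s := analyticOnNhd_id.mul hga
    have hzzg : AnalyticOnNhd ℂ (fun z => z * (z * g z)) s := analyticOnNhd_id.mul hzg
    have EL : iteratedDerivWithin (m + 1) (fun z => (1 - z ^ 2) * g z) s 0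
        = iteratedDerivWithin (m + 1) g s 0
          - iteratedDerivWithin (m + 1) (fun z => z * (z * g z)) s 0 := by
      rw [hfun]
      exact iteratedDerivWithin_sub h0 hus (hga.contDiffOn hus 0 h0) (hzzg.contDiffOn hus 0 h0)
    have shift : ∀ k : ℕ, iteratedDerivWithin k g s 0 = iteratedDeriv (k + 1) f 0 := by
      intro k
      rw [hgdef, iter_deriv_shift hs hus k h0, iteratedDerivWithin_of_isOpen' _ hs h0]
    have Ezz : iteratedDerivWithin (m + 1) (fun z => z * (z * g z)) s 0
        = (m * (m + 1) : ℂ) * iteratedDeriv m f 0 := by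
      cases m with
      | zero =>
        rw [iter_mul_id hs hus 0 _ hzg 0 h0]
        simp
      | succ k =>
        rw [iter_mul_id hs hus (k + 1) _ hzg 0 h0,
            iter_mul_id hs hus k _ hga 0 h0, shift k]
        push_cast
        ring
    rw [EL, Ezz, ER, shift (m + 1), iteratedDerivWithin_of_isOpen' _ hs h0] at E
    simp only [show m + 1 + 1 = m + 2 from rfl] at E
    linear_combination E
  -- arithmetic with factorials
  have key' := key n
  simp only [taylorCoeff]
  have hfac2 : (((n + 2).factorial : ℂ)) = (n + 2) * (n + 1) * (n.factorial : ℂ) := by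
    rw [show n + 2 = (n + 1) + 1 from rfl, Nat.factorial_succ, Nat.factorial_succ]
    push_cast
    ring
  have hfac1 : (((n + 1).factorial : ℂ)) = (n + 1) * (n.factorial : ℂ) := by
    rw [Nat.factorial_succ]; push_cast; ring
  have hne : (n.factorial : ℂ) ≠ 0 := Nat.cast_ne_zero.2 n.factorial_ne_zero
  have hne1 : ((n : ℂ) + 1) ≠ 0 := by
    have : ((n + 1 : ℕ) : ℂ) ≠ 0 := Nat.cast_ne_zero.2 (Nat.succ_ne_zero n)
    push_cast at this; exact this
  have hne2 : ((n : ℂ) + 2) ≠ 0 := by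
    have : ((n + 2 : ℕ) : ℂ) ≠ 0 := Nat.cast_ne_zero.2 (by omega)
    push_cast at this; exact this
  rw [key', hfac2, hfac1]
  field_simp
  ring
end

section
/- For every n ≥ 2, the Taylor coefficient g_n(α) equals (1/(2α)) · Σ_{k=1}^{n} 2^k · binom(α, k) · binom(n-1, n-k), where binom(α,k) is the generalized binomial coefficient. -/
open Complex Set Finset

/-- Generalized binomial coefficient `binom(α, k) = α(α-1)⋯(α-k+1)/k!`. -/
noncomputable def genBinom (α : ℂ) (k : ℕ) : ℂ :=
  (∏ j ∈ Finset.range k, (α - j)) / k.factorial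

open Topology
section helpers


variable {s : Set ℂ}

lemma iteratedDeriv_eq_within (hs : IsOpen s) (f : ℂ → ℂ) {x : ℂ} (hx : x ∈ s) (n : ℕ) :
    iteratedDeriv n f x = iteratedDerivWithin n f s x := by
  rw [iteratedDerivWithin_eq_iteratedFDerivWithin, iteratedDeriv_eq_iteratedFDeriv,
    iteratedFDerivWithin_of_isOpen n hs hx]

lemma itD_add (hs : IsOpen s) {f g : ℂ → ℂ} (hf : AnalyticOnNhd ℂ f s)
    (hg : AnalyticOnNhd ℂ g s) {x : ℂ} (hx : x ∈ s) (n : ℕ) :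
    iteratedDeriv n (fun z => f z + g z) x = iteratedDeriv n f x + iteratedDeriv n g x := by
  rw [iteratedDeriv_eq_within hs _ hx, iteratedDeriv_eq_within hs f hx,
    iteratedDeriv_eq_within hs g hx]
  exact iteratedDerivWithin_add hx hs.uniqueDiffOn (hf.contDiffOn hs.uniqueDiffOn x hx)
    (hg.contDiffOn hs.uniqueDiffOn x hx)

lemma itD_const_mul (hs : IsOpen s) {f : ℂ → ℂ} (hf : AnalyticOnNhd ℂ f s) (c : ℂ)
    {x : ℂ} (hx : x ∈ s) (n : ℕ) :
    iteratedDeriv n (fun z => c * f z) x = c * iteratedDeriv n f x := by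
  rw [iteratedDeriv_eq_within hs _ hx, iteratedDeriv_eq_within hs f hx]
  exact iteratedDerivWithin_const_mul hx hs.uniqueDiffOn c (hf.contDiffOn hs.uniqueDiffOn x hx)

lemma itD_mul_id (hs : IsOpen s) : ∀ (n : ℕ) (g : ℂ → ℂ), AnalyticOnNhd ℂ g s → ∀ x ∈ s,
    iteratedDeriv n (fun z => z * g z) x
      = x * iteratedDeriv n g x + n * iteratedDeriv (n - 1) g x := by
  intro n
  induction n with
  | zero => intro g hg x hx; simp
  | succ n ih =>
    intro g hg x hx
    have hEq : Set.EqOn (deriv (fun z => z * g z)) (fun z => g z + z * deriv g z) s := by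
      intro z hz
      rw [deriv_fun_mul (c := fun y => y) differentiableAt_id ((hg z hz).differentiableAt)]
      simp only [deriv_id'', one_mul]
    rw [iteratedDeriv_succ', hEq.iteratedDeriv_of_isOpen hs n hx,
      itD_add hs hg ((analyticOnNhd_id).mul hg.deriv) hx n,
      ih (deriv g) hg.deriv x hx]
    rcases n with _ | m
    · rw [← iteratedDeriv_succ']; push_cast; ring
    · rw [← iteratedDeriv_succ']
      have : m + 1 - 1 = m := rfl
      rw [this, ← iteratedDeriv_succ']
      push_cast
      ring

end helpers

noncomputable def ufun (α : ℝ) (z : ℂ) : ℂ := ((1 + z) / (1 - z)) ^ (α : ℂ)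

section ballfacts

lemma ball_sub_ne {z : ℂ} (hz : z ∈ Metric.ball (0:ℂ) 1) : (1:ℂ) - z ≠ 0 := by
  intro h
  have : z = 1 := by linear_combination -h
  simp [this] at hz

lemma ball_add_ne {z : ℂ} (hz : z ∈ Metric.ball (0:ℂ) 1) : (1:ℂ) + z ≠ 0 := by
  intro h
  have : z = -1 := by linear_combination h
  simp [this] at hz

lemma ball_slit {z : ℂ} (hz : z ∈ Metric.ball (0:ℂ) 1) :
    (1 + z) / (1 - z) ∈ Complex.slitPlane := by
  left
  rw [div_re, ← add_div]
  apply div_pos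
  · have hn : Complex.normSq z < 1 := by
      have h : ‖z‖ < 1 := by simpa [Complex.dist_eq] using hz
      rw [← Complex.sq_norm]
      nlinarith [norm_nonneg z]
    rw [Complex.normSq_apply] at hn
    simp only [Complex.add_re, Complex.one_re, Complex.sub_re, Complex.add_im,
      Complex.one_im, Complex.sub_im]
    nlinarith
  · exact Complex.normSq_pos.mpr (ball_sub_ne hz)

lemma mobius_analytic : AnalyticOnNhd ℂ (fun z : ℂ => (1 + z) / (1 - z)) (Metric.ball 0 1) := by
  apply AnalyticOnNhd.div
  · exact (analyticOnNhd_const).add analyticOnNhd_id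
  · exact (analyticOnNhd_const).sub analyticOnNhd_id
  · exact fun z hz => ball_sub_ne hz

lemma ufun_analytic (α : ℝ) : AnalyticOnNhd ℂ (ufun α) (Metric.ball 0 1) :=
  mobius_analytic.cpow analyticOnNhd_const (fun z hz => ball_slit hz)

lemma ufun_deriv_eq (α : ℝ) {z : ℂ} (hz : z ∈ Metric.ball (0:ℂ) 1) :
    deriv (ufun α) z = 2 * α * ufun α z + z ^ 2 * deriv (ufun α) z := by
  have h1 : (1:ℂ) - z ≠ 0 := ball_sub_ne hz
  have h2 : (1:ℂ) + z ≠ 0 := ball_add_ne hz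
  have hw0 : (1 + z) / (1 - z) ≠ 0 := div_ne_zero h2 h1
  have hmob : HasDerivAt (fun z : ℂ => (1 + z) / (1 - z)) (2 / (1 - z) ^ 2) z := by
    have ha : HasDerivAt (fun z : ℂ => 1 + z) 1 z := by
      simpa using (hasDerivAt_id z).const_add (1:ℂ)
    have hb : HasDerivAt (fun z : ℂ => 1 - z) (-1) z := by
      simpa using (hasDerivAt_id z).const_sub (1:ℂ)
    have := ha.fun_div hb h1
    rw [show (2:ℂ) / (1 - z) ^ 2 = (1 * (1 - z) - (1 + z) * -1) / (1 - z) ^ 2 by ring]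
    exact this
  have hu : HasDerivAt (ufun α)
      ((α : ℂ) * ((1 + z) / (1 - z)) ^ ((α : ℂ) - 1) * (2 / (1 - z) ^ 2)) z :=
    hmob.cpow_const (ball_slit hz)
  rw [hu.deriv]
  have key : ((1 + z) / (1 - z)) ^ ((α : ℂ) - 1) * ((1 + z) / (1 - z)) = ufun α z := by
    rw [ufun]
    nth_rewrite 2 [show (α : ℂ) = ((α : ℂ) - 1) + 1 by ring]
    rw [Complex.cpow_add _ _ hw0, Complex.cpow_one]
  rw [← key]
  field_simp
  ring
end ballfacts

noncomputable def Dc (α : ℝ) (n : ℕ) : ℂ := iteratedDeriv n (ufun α) 0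

section recur

variable (α : ℝ)

lemma hzero : (0:ℂ) ∈ Metric.ball (0:ℂ) 1 := by simp

lemma D_zero : Dc α 0 = 1 := by
  simp [Dc, ufun]

lemma D_succ (n : ℕ) : Dc α (n+1) = 2*α * Dc α n
    + iteratedDeriv n (fun z => z * (z * deriv (ufun α) z)) 0 := by
  have hu := ufun_analytic α
  have hd := hu.deriv
  rw [Dc, iteratedDeriv_succ']
  have hEq : Set.EqOn (deriv (ufun α))
      (fun z => (2*α : ℂ) * ufun α z + z * (z * deriv (ufun α) z)) (Metric.ball 0 1) := by
    intro z hz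
    have h := ufun_deriv_eq α hz
    simp only
    linear_combination h
  rw [hEq.iteratedDeriv_of_isOpen Metric.isOpen_ball n (hzero),
    itD_add Metric.isOpen_ball (analyticOnNhd_const.mul hu)
      (analyticOnNhd_id.mul (analyticOnNhd_id.mul hd)) (hzero) n,
    itD_const_mul Metric.isOpen_ball hu (2*α : ℂ) (hzero) n]
  rfl

lemma D_one : Dc α 1 = 2*α := by
  rw [show Dc α 1 = Dc α (0 + 1) from rfl, D_succ, D_zero]
  simp

lemma D_two_succ (m : ℕ) : Dc α (m+2) = 2*α * Dc α (m+1) + (m+1) * m * Dc α m := by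
  have hu := ufun_analytic α
  have hd := hu.deriv
  rw [show m+2 = (m+1)+1 from rfl, D_succ α (m+1)]
  congr 1
  rw [itD_mul_id Metric.isOpen_ball (m+1) _ (analyticOnNhd_id.mul hd) 0 (hzero)]
  simp only [Nat.add_sub_cancel]
  rw [itD_mul_id Metric.isOpen_ball m (deriv (ufun α)) hd 0 (hzero)]
  rcases m with _ | k
  · simp
  · have h1 : k + 1 - 1 = k := rfl
    have h3 : iteratedDeriv k (deriv (ufun α)) 0 = Dc α (k+1) := by
      rw [Dc, iteratedDeriv_succ']
    rw [h1, h3]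
    push_cast
    ring

end recur

noncomputable def bc (α : ℂ) (n : ℕ) : ℂ :=
  ∑ k ∈ Finset.Icc 1 n, (2:ℂ) ^ k * genBinom α k * (Nat.choose (n-1) (n-k))

noncomputable def dd (α : ℂ) (j : ℕ) : ℂ := 2 ^ (j+1) * genBinom α (j+1)

lemma genBinom_rec (α : ℂ) (k : ℕ) :
    (k+1 : ℂ) * genBinom α (k+1) = (α - k) * genBinom α k := by
  rw [genBinom, genBinom, Finset.prod_range_succ, Nat.factorial_succ]
  have h1 : ((k+1).factorial : ℂ) ≠ 0 := by exact_mod_cast (k+1).factorial_ne_zero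
  have h2 : ((k).factorial : ℂ) ≠ 0 := by exact_mod_cast (k).factorial_ne_zero
  have hk1 : (k:ℂ) + 1 ≠ 0 := by exact Nat.cast_add_one_ne_zero k
  field_simp [hk1]
  push_cast
  ring

lemma dd_rec (α : ℂ) (j : ℕ) :
    2 * α * dd α j = (j+2) * dd α (j+1) + 2*(j+1) * dd α j := by
  have h := genBinom_rec α (j+1)
  rw [dd, dd]
  push_cast at h ⊢
  calc 2 * α * (2 ^ (j + 1) * genBinom α (j + 1))
      = 2 ^ (j+2) * ((α - (j+1)) * genBinom α (j+1)) + 2*((j:ℂ)+1) * (2 ^ (j+1) * genBinom α (j+1)) := by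
        ring
    _ = _ := by rw [← h]; ring

lemma bc_repr (α : ℂ) (r M : ℕ) (hr : 1 ≤ r) (hM : r ≤ M) :
    bc α r = ∑ j ∈ Finset.range M, dd α j * ((r-1).choose j) := by
  rw [bc, ← Finset.Ico_add_one_right_eq_Icc, Finset.sum_Ico_eq_sum_range]
  have hr' : r + 1 - 1 = r := rfl
  rw [hr']
  rw [← Finset.sum_subset (Finset.range_subset_range.mpr hM)]
  · apply Finset.sum_congr rfl
    intro j hj
    rw [Finset.mem_range] at hj
    have h1 : r - (1 + j) = (r - 1) - j := by omega
    have h2 : j ≤ r - 1 := by omega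
    rw [h1, Nat.choose_symm h2, dd]
    ring
  · intro j _ hj
    rw [Finset.mem_range, not_lt] at hj
    have : r - 1 < j := by omega
    rw [Nat.choose_eq_zero_of_lt this]
    simp

lemma natid (n j : ℕ) : (n+3) * Nat.choose (n+2) (j+1)
    = (j+2) * Nat.choose (n+1) j + 2*(j+2) * Nat.choose (n+1) (j+1)
      + (n+1) * Nat.choose n (j+1) := by
  have h1 := Nat.add_one_mul_choose_eq (n+2) (j+1)
  have h2 := Nat.add_one_mul_choose_eq n (j+1)
  have h3 : Nat.choose (n+3) (j+2) = Nat.choose (n+1) j + 2 * Nat.choose (n+1) (j+1)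
      + Nat.choose (n+1) (j+2) := by
    rw [show n+3 = (n+2)+1 from rfl, Nat.choose_succ_succ (n+2) (j+1),
      show n+2 = (n+1)+1 from rfl, Nat.choose_succ_succ (n+1) j,
      Nat.choose_succ_succ (n+1) (j+1)]
    ring
  have e1 : (n+3) * Nat.choose (n+2) (j+1) = Nat.choose (n+3) (j+2) * (j+2) := by
    simpa [Nat.succ_eq_add_one] using h1
  have e2 : (n+1) * Nat.choose n (j+1) = Nat.choose (n+1) (j+2) * (j+2) := by
    simpa [Nat.succ_eq_add_one] using h2
  rw [e1, e2, h3]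
  ring

lemma bc_rec (α : ℂ) (n : ℕ) :
    (n+3 : ℂ) * bc α (n+3) = 2*α * bc α (n+2) + (n+1) * bc α (n+1) := by
  rw [bc_repr α (n+3) (n+3) (by omega) (by omega),
    bc_repr α (n+2) (n+3) (by omega) (by omega),
    bc_repr α (n+1) (n+3) (by omega) (by omega)]
  have hs1 : n + 3 - 1 = n + 2 := rfl
  have hs2 : n + 2 - 1 = n + 1 := rfl
  have hs3 : n + 1 - 1 = n := rfl
  rw [hs1, hs2, hs3]
  set d := dd α with hd
  -- T : the shifted sum
  set T := ∑ j ∈ Finset.range (n+2), ((j:ℂ)+2) * d (j+1) * ((n+1).choose j) with hT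
  have hF : ∑ j ∈ Finset.range (n+3),
      (((n:ℂ)+3) * ((n+2).choose j) - 2*((j:ℂ)+1) * ((n+1).choose j)
        - ((n:ℂ)+1) * ((n).choose j)) * d j = T := by
    rw [Finset.sum_range_succ']
    simp only [Nat.cast_zero, Nat.choose_zero_right, Nat.cast_one]
    rw [show (((n:ℂ)+3) * 1 - 2*((0:ℂ)+1) * 1 - ((n:ℂ)+1) * 1) * d 0 = 0 by ring, add_zero, hT]
    apply Finset.sum_congr rfl
    intro j _
    have := natid n j
    have hc : ((n:ℂ)+3) * ((n+2).choose (j+1))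
        = ((j:ℂ)+2) * ((n+1).choose j) + 2*((j:ℂ)+2) * ((n+1).choose (j+1))
          + ((n:ℂ)+1) * ((n).choose (j+1)) := by
      exact_mod_cast congrArg (Nat.cast : ℕ → ℂ) this
    push_cast
    push_cast at hc
    linear_combination d (j+1) * hc
  have h3 : ∑ j ∈ Finset.range (n+3), ((j:ℂ)+2) * d (j+1) * ((n+1).choose j) = T := by
    rw [Finset.sum_range_succ, hT]
    have : ((n+1).choose (n+2) : ℂ) = 0 := by
      rw [Nat.choose_eq_zero_of_lt (by omega)]; simp
    rw [this]
    ring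
  have h2 : 2*α * ∑ j ∈ Finset.range (n+3), d j * ((n+1).choose j)
      = T + ∑ j ∈ Finset.range (n+3), 2*((j:ℂ)+1) * d j * ((n+1).choose j) := by
    rw [Finset.mul_sum, ← h3, ← Finset.sum_add_distrib]
    apply Finset.sum_congr rfl
    intro j _
    have := dd_rec α j
    rw [← hd] at this
    linear_combination ((n+1).choose j : ℂ) * this
  -- final assembly
  have expand : ∑ j ∈ Finset.range (n+3),
      (((n:ℂ)+3) * ((n+2).choose j) - 2*((j:ℂ)+1) * ((n+1).choose j)
        - ((n:ℂ)+1) * ((n).choose j)) * d j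
      = ((n:ℂ)+3) * ∑ j ∈ Finset.range (n+3), d j * ((n+2).choose j)
        - ∑ j ∈ Finset.range (n+3), 2*((j:ℂ)+1) * d j * ((n+1).choose j)
        - ((n:ℂ)+1) * ∑ j ∈ Finset.range (n+3), d j * ((n).choose j) := by
    rw [Finset.mul_sum, Finset.mul_sum, ← Finset.sum_sub_distrib, ← Finset.sum_sub_distrib]
    apply Finset.sum_congr rfl
    intro j _
    ring
  rw [expand] at hF
  linear_combination hF - h2

section final

lemma genBinom_one (α : ℂ) : genBinom α 1 = α := by
  simp [genBinom]

lemma genBinom_two (α : ℂ) : genBinom α 2 = α * (α - 1) / 2 := by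
  rw [genBinom]
  rw [Finset.prod_range_succ, Finset.prod_range_one]
  norm_num [Nat.factorial]

lemma bc_one (α : ℂ) : bc α 1 = 2 * α := by
  rw [bc_repr α 1 1 le_rfl le_rfl, Finset.sum_range_one, dd, genBinom_one]
  norm_num

lemma bc_two (α : ℂ) : bc α 2 = 2 * α ^ 2 := by
  rw [bc_repr α 2 2 (by omega) le_rfl, Finset.sum_range_succ, Finset.sum_range_one,
    dd, dd, genBinom_one, genBinom_two]
  norm_num
  ring

lemma ac_eq_bc (α : ℝ) : ∀ n : ℕ,
    (Dc α (n+1) / (n+1).factorial = bc (α:ℂ) (n+1)) ∧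
    (Dc α (n+2) / (n+2).factorial = bc (α:ℂ) (n+2)) := by
  intro n
  induction n with
  | zero =>
    constructor
    · rw [D_one, bc_one]
      norm_num
    · rw [show (0:ℕ)+2 = 0+2 from rfl, D_two_succ, D_one, bc_two]
      norm_num [Nat.factorial]
      ring
  | succ n ih =>
    refine ⟨ih.2, ?_⟩
    have hrec := D_two_succ α (n+1)
    have hbc := bc_rec (α:ℂ) n
    have hne3 : ((n:ℂ)+3) ≠ 0 := by
      have : ((n:ℂ)+3) = ((n+3 : ℕ) : ℂ) := by push_cast; ring
      rw [this]
      exact Nat.cast_ne_zero.mpr (by omega)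
    have f1 : (((n+1).factorial : ℂ)) ≠ 0 := by exact_mod_cast (n+1).factorial_ne_zero
    have f2 : (((n+2).factorial : ℂ)) ≠ 0 := by exact_mod_cast (n+2).factorial_ne_zero
    have f3 : (((n+3).factorial : ℂ)) ≠ 0 := by exact_mod_cast (n+3).factorial_ne_zero
    have e1 : ((n+3).factorial : ℂ) = ((n:ℂ)+3) * ((n+2).factorial : ℂ) := by
      rw [show n+3 = (n+2)+1 from rfl, Nat.factorial_succ]
      push_cast; ring
    have e2 : ((n+2).factorial : ℂ) = ((n:ℂ)+2) * ((n+1).factorial : ℂ) := by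
      rw [show n+2 = (n+1)+1 from rfl, Nat.factorial_succ]
      push_cast; ring
    have key : ((n:ℂ)+3) * (Dc α (n+3) / ((n+3).factorial : ℂ))
        = 2*(α:ℂ) * (Dc α (n+2) / ((n+2).factorial : ℂ))
          + ((n:ℂ)+1) * (Dc α (n+1) / ((n+1).factorial : ℂ)) := by
      rw [show n+3 = (n+1)+2 from rfl] at *
      rw [hrec, e1, e2]
      have hne2 : ((n:ℂ)+2) ≠ 0 := by
        have : ((n:ℂ)+2) = ((n+2 : ℕ) : ℂ) := by push_cast; ring
        rw [this]
        exact Nat.cast_ne_zero.mpr (by omega)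
      field_simp
      push_cast
      ring
    rw [ih.1, ih.2] at key
    have : ((n:ℂ)+3) * (Dc α (n+3) / ((n+3).factorial : ℂ)) = ((n:ℂ)+3) * bc (α:ℂ) (n+3) := by
      rw [key, hbc]
    exact mul_left_cancel₀ hne3 this

lemma taylor_glue (α : ℝ) (hα : (α:ℂ) ≠ 0) (n : ℕ) (hn : 1 ≤ n) :
    taylorCoeff α n = (1/(2*(α:ℂ))) * (Dc α n / n.factorial) := by
  have h2 : (2*(α:ℂ)) ≠ 0 := mul_ne_zero two_ne_zero hα
  rw [taylorCoeff]
  have hfg : fgon α = fun z => (-(2*(α:ℂ))⁻¹) + (2*(α:ℂ))⁻¹ * ufun α z := by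
    funext z
    rw [fgon, ufun]
    field_simp
    ring
  rw [hfg, iteratedDeriv_eq_within Metric.isOpen_ball _ hzero n,
    iteratedDerivWithin_const_add (by omega : 0 < n) _,
    iteratedDerivWithin_const_mul hzero Metric.isOpen_ball.uniqueDiffOn _
      ((ufun_analytic α).contDiffOn Metric.isOpen_ball.uniqueDiffOn 0 hzero),
    ← iteratedDeriv_eq_within Metric.isOpen_ball _ hzero n, ← Dc]
  ring

theorem stmt2 (α : ℝ) (hα : α ∈ Set.Ioo (0:ℝ) 1) (n : ℕ) (hn : 2 ≤ n) :
    taylorCoeff α n = (1 / (2 * α)) *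
      ∑ k ∈ Finset.Icc 1 n, (2:ℂ) ^ k * genBinom α k * (Nat.choose (n-1) (n-k)) := by
  have hα0 : (α:ℂ) ≠ 0 := by
    exact_mod_cast ne_of_gt hα.1
  rw [taylor_glue α hα0 n (by omega)]
  obtain ⟨m, rfl⟩ : ∃ m, n = m + 1 := ⟨n - 1, by omega⟩
  rw [(ac_eq_bc α m).1]
  rfl
end final
end

section
/- For α ∈ (0,1), the subsequences {g_{2m}(α)}_{m≥1} and {g_{2m-1}(α)}_{m≥1} are strictly decreasing in m. -/
open Set

/-- The coefficient sequence `g_n(α)` defined by the recurrence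
`g_0 = 0`, `g_1 = 1`, `g_{n+2} = (2α g_{n+1} + n g_n)/(n+2)`. -/
noncomputable def g (α : ℝ) : ℕ → ℝ
  | 0 => 0
  | 1 => 1
  | (n + 2) => (2 * α * g α (n + 1) + n * g α n) / (n + 2)

lemma g_rec (α : ℝ) (n : ℕ) :
    ((n:ℝ) + 2) * g α (n + 2) = 2 * α * g α (n + 1) + n * g α n := by
  rw [show g α (n+2) = (2 * α * g α (n + 1) + n * g α n) / (n + 2) from rfl]
  field_simp

lemma g_key (α : ℝ) (h0 : 0 < α) (h1 : α < 1) :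
    ∀ n : ℕ, 0 < g α (n+1) ∧ α * g α (n+2) < g α (n+1) ∧ α * g α (n+1) ≤ g α (n+2) := by
  intro n
  induction n with
  | zero =>
    have e1 : g α 1 = 1 := rfl
    have e2 : g α 2 = α := by
      show (2 * α * g α 1 + (0:ℕ) * g α 0) / ((0:ℕ) + 2) = α
      rw [e1]
      norm_num
    rw [e1, e2]
    exact ⟨one_pos, by nlinarith, le_of_eq (mul_one α)⟩
  | succ n ih =>
    obtain ⟨hp, hlt, hle⟩ := ih
    have hp2 : 0 < g α (n+2) := lt_of_lt_of_le (by positivity) hle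
    have erec : ((n:ℝ) + 3) * g α (n + 3) = 2 * α * g α (n + 2) + (n+1) * g α (n+1) := by
      have := g_rec α (n+1)
      push_cast at this ⊢
      convert this using 2 <;> ring
    have hn3 : (0:ℝ) < (n:ℝ) + 3 := by positivity
    refine ⟨hp2, ?_, ?_⟩
    · have h2 : ((n:ℝ)+3) * (α * g α (n+3)) < ((n:ℝ)+3) * g α (n+2) := by
        nlinarith [mul_le_mul_of_nonneg_left hle (show (0:ℝ) ≤ (n:ℝ)+1 by positivity),
          mul_lt_mul_of_pos_right (show α*α < 1 by nlinarith) hp2]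
      exact lt_of_mul_lt_mul_left h2 (le_of_lt hn3)
    · have h2 : ((n:ℝ)+3) * (α * g α (n+2)) ≤ ((n:ℝ)+3) * g α (n+3) := by
        nlinarith [mul_le_mul_of_nonneg_left (le_of_lt hlt) (show (0:ℝ) ≤ (n:ℝ)+1 by positivity)]
      exact le_of_mul_le_mul_left h2 hn3
    
lemma g_step (α : ℝ) (h0 : 0 < α) (h1 : α < 1) (n : ℕ) :
    g α (n + 3) < g α (n + 1) := by
  obtain ⟨hp, hlt, hle⟩ := g_key α h0 h1 n
  have hp2 : 0 < g α (n+2) := lt_of_lt_of_le (by positivity) hle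
  have erec : ((n:ℝ) + 3) * g α (n + 3) = 2 * α * g α (n + 2) + (n+1) * g α (n+1) := by
    have := g_rec α (n+1)
    push_cast at this ⊢
    convert this using 2 <;> ring
  have hn3 : (0:ℝ) < (n:ℝ) + 3 := by positivity
  have h2 : ((n:ℝ)+3) * g α (n+3) < ((n:ℝ)+3) * g α (n+1) := by nlinarith
  exact lt_of_mul_lt_mul_left h2 (le_of_lt hn3)

theorem stmt5 (α : ℝ) (hα : α ∈ Set.Ioo (0:ℝ) 1) :
    StrictAnti (fun m : ℕ => g α (2 * (m + 1))) ∧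
    StrictAnti (fun m : ℕ => g α (2 * (m + 1) - 1)) := by
  obtain ⟨h0, h1⟩ := hα
  constructor
  · apply strictAnti_nat_of_succ_lt
    intro m
    have h := g_step α h0 h1 (2*m+1)
    have e1 : 2 * (m + 1 + 1) = 2*m+1+3 := by omega
    have e2 : 2 * (m + 1) = 2*m+1+1 := by omega
    simpa [e1, e2] using h
  · apply strictAnti_nat_of_succ_lt
    intro m
    have h := g_step α h0 h1 (2*m)
    have e1 : 2 * (m + 1 + 1) - 1 = 2*m+3 := by omega
    have e2 : 2 * (m + 1) - 1 = 2*m+1 := by omega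
    simpa [e1, e2] using h
end

section
/- For every α ∈ (0,1) there exists a constant C = C(α) > 0 such that g_n(α) ≤ C / n^{1-α} for all n ≥ 1. -/
open Set

/-- AM-GM style bound: for `0 < c - t`, `0 ≤ t`, negative-type exponent `α - 1 ≤ 0`,
`(c+t)^(α-1) + (c-t)^(α-1) ≥ 2 c^(α-1)`. -/
lemma key_deriv_ineq {α c t : ℝ} (hα : α ∈ Set.Ioo (0:ℝ) 1) (ht : 0 ≤ t) (hct : t < c) :
    2 * c ^ (α - 1) ≤ (c + t) ^ (α - 1) + (c - t) ^ (α - 1) := by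
  obtain ⟨hα0, hα1⟩ := hα
  have hc : 0 < c := lt_of_le_of_lt ht hct
  have h1 : (0:ℝ) < c + t := by linarith
  have h2 : (0:ℝ) < c - t := by linarith
  have hprod : ((c + t) * (c - t)) ^ (α - 1) = (c + t) ^ (α - 1) * (c - t) ^ (α - 1) :=
    Real.mul_rpow h1.le h2.le
  have hle : (c + t) * (c - t) ≤ c * c := by nlinarith
  have hmono : (c * c) ^ (α - 1) ≤ ((c + t) * (c - t)) ^ (α - 1) :=
    Real.rpow_le_rpow_of_nonpos (by positivity) hle (by linarith)
  have hsq : (c * c) ^ (α - 1) = c ^ (α - 1) * c ^ (α - 1) := Real.mul_rpow hc.le hc.le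
  -- AM-GM: a + b ≥ 2√(ab) ≥ 2√(c^(α-1)·c^(α-1)) = 2 c^(α-1)
  set a := (c + t) ^ (α - 1)
  set b := (c - t) ^ (α - 1)
  have ha : 0 ≤ a := Real.rpow_nonneg h1.le _
  have hb : 0 ≤ b := Real.rpow_nonneg h2.le _
  have hcp : 0 ≤ c ^ (α - 1) := Real.rpow_nonneg hc.le _
  have hab : c ^ (α - 1) * c ^ (α - 1) ≤ a * b := by
    rw [← hsq, ← hprod]; exact hmono
  have h1' : Real.sqrt (c ^ (α - 1) * c ^ (α - 1)) ≤ Real.sqrt (a * b) := Real.sqrt_le_sqrt hab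
  have h2' : Real.sqrt (c ^ (α - 1) * c ^ (α - 1)) = c ^ (α - 1) := Real.sqrt_mul_self hcp
  have h3' : Real.sqrt (a * b) = Real.sqrt a * Real.sqrt b := Real.sqrt_mul ha b
  rw [h2', h3'] at h1'
  nlinarith [sq_nonneg (Real.sqrt a - Real.sqrt b), Real.sq_sqrt ha, Real.sq_sqrt hb]

/-- Key inequality: for `2 ≤ c`, `2α c^(α-1) + (c-1)^α ≤ (c+1)^α`. -/
lemma key_ineq {α : ℝ} (hα : α ∈ Set.Ioo (0:ℝ) 1) {c : ℝ} (hc : 2 ≤ c) :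
    2 * α * c ^ (α - 1) + (c - 1) ^ α ≤ (c + 1) ^ α := by
  obtain ⟨hα0, hα1⟩ := hα
  set F : ℝ → ℝ := fun t => (c + t) ^ α - (c - t) ^ α - 2 * α * t * c ^ (α - 1) with hF
  have hderiv : ∀ t ∈ Set.Icc (0:ℝ) 1,
      HasDerivAt F (1 * α * (c + t) ^ (α - 1) - (-1) * α * (c - t) ^ (α - 1)
        - 2 * α * c ^ (α - 1)) t := by
    intro t ht
    have h1 : c + t ≠ 0 := by rcases ht with ⟨h, h'⟩; intro hh; nlinarith
    have h2 : c - t ≠ 0 := by rcases ht with ⟨h, h'⟩; intro hh; nlinarith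
    have d1 : HasDerivAt (fun t : ℝ => (c + t) ^ α) (1 * α * (c + t) ^ (α - 1)) t :=
      ((hasDerivAt_id t).const_add c).rpow_const (Or.inl h1)
    have d2 : HasDerivAt (fun t : ℝ => (c - t) ^ α) ((-1) * α * (c - t) ^ (α - 1)) t :=
      ((hasDerivAt_id t).const_sub c).rpow_const (Or.inl h2)
    have d3 : HasDerivAt (fun t : ℝ => 2 * α * t * c ^ (α - 1)) (2 * α * c ^ (α - 1)) t := by
      have : HasDerivAt (fun t : ℝ => t * (2 * α * c ^ (α - 1))) (2 * α * c ^ (α - 1)) t := by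
        simpa using (hasDerivAt_id t).mul_const (2 * α * c ^ (α - 1))
      convert this using 2 with t; ring
    exact (d1.sub d2).sub d3
  have hmono : MonotoneOn F (Set.Icc (0:ℝ) 1) := by
    apply monotoneOn_of_deriv_nonneg (convex_Icc 0 1)
    · exact fun t ht => ((hderiv t ht).continuousAt).continuousWithinAt
    · intro t ht
      rw [interior_Icc] at ht
      exact ((hderiv t (Set.mem_Icc_of_Ioo ht)).differentiableAt).differentiableWithinAt
    · intro t ht
      rw [interior_Icc] at ht
      rw [(hderiv t (Set.mem_Icc_of_Ioo ht)).deriv]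
      have := key_deriv_ineq (α := α) (c := c) (t := t) ⟨hα0, hα1⟩ (le_of_lt ht.1)
        (by linarith [ht.2])
      nlinarith
  have h01 : F 0 ≤ F 1 := hmono (by norm_num) (by norm_num) (by norm_num)
  simp only [hF] at h01
  norm_num at h01
  linarith

lemma g_bound {α : ℝ} (hα : α ∈ Set.Ioo (0:ℝ) 1) :
    ∀ n : ℕ, g α (n + 1) ≤ 2 * ((n:ℝ) + 1) ^ (α - 1) ∧
      g α (n + 2) ≤ 2 * ((n:ℝ) + 2) ^ (α - 1) := by
  obtain ⟨hα0, hα1⟩ := hα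
  intro n
  induction n with
  | zero =>
    constructor
    · have h1 : g α (0 + 1) = 1 := rfl
      rw [h1]
      norm_num
    · have h2 : g α (0 + 2) = α := by
        show (2 * α * g α 1 + (0:ℕ) * g α 0) / ((0:ℕ) + 2) = α
        have : g α 1 = 1 := rfl
        rw [this]; push_cast; ring
      rw [h2]
      have h3 : (2:ℝ) ^ (-1:ℝ) ≤ 2 ^ (α - 1) :=
        Real.rpow_le_rpow_of_exponent_le (by norm_num) (by linarith)
      rw [Real.rpow_neg_one] at h3
      norm_num at h3 ⊢
      linarith
  | succ n ih =>
    obtain ⟨ih1, ih2⟩ := ih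
    refine ⟨by exact_mod_cast ih2, ?_⟩
    -- g α (n+3) = (2α g(n+2) + (n+1) g(n+1))/(n+3)
    have hrec : g α (n + 3) = (2 * α * g α (n + 2) + ((n:ℝ) + 1) * g α (n + 1)) / ((n:ℝ) + 3) := by
      show g α ((n + 1) + 2) = _
      rw [g]
      push_cast
      ring_nf
    have hn1 : (0:ℝ) < (n:ℝ) + 1 := by positivity
    have hn3 : (0:ℝ) < (n:ℝ) + 3 := by positivity
    -- numerator bound
    have hnum : 2 * α * g α (n + 2) + ((n:ℝ) + 1) * g α (n + 1)
        ≤ 2 * (2 * α * ((n:ℝ) + 2) ^ (α - 1) + ((n:ℝ) + 1) ^ α) := by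
      have h1 : ((n:ℝ) + 1) * g α (n + 1) ≤ ((n:ℝ) + 1) * (2 * ((n:ℝ) + 1) ^ (α - 1)) :=
        mul_le_mul_of_nonneg_left ih1 hn1.le
      have h2 : 2 * α * g α (n + 2) ≤ 2 * α * (2 * ((n:ℝ) + 2) ^ (α - 1)) :=
        mul_le_mul_of_nonneg_left ih2 (by positivity)
      have hx : ((n:ℝ) + 1) * ((n:ℝ) + 1) ^ (α - 1) = ((n:ℝ) + 1) ^ α := by
        nth_rewrite 1 [← Real.rpow_one ((n:ℝ) + 1)]
        rw [← Real.rpow_add hn1]; ring_nf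
      nlinarith
    have hkey := key_ineq ⟨hα0, hα1⟩ (c := (n:ℝ) + 2) (by push_cast; linarith [Nat.cast_nonneg (α := ℝ) n])
    have hkey' : 2 * α * ((n:ℝ) + 2) ^ (α - 1) + ((n:ℝ) + 1) ^ α ≤ ((n:ℝ) + 3) ^ α := by
      have e1 : (n:ℝ) + 2 - 1 = (n:ℝ) + 1 := by ring
      have e2 : (n:ℝ) + 2 + 1 = (n:ℝ) + 3 := by ring
      rw [e1, e2] at hkey; exact hkey
    have hfin : ((n:ℝ) + 3) ^ α = ((n:ℝ) + 3) * ((n:ℝ) + 3) ^ (α - 1) := by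
      nth_rewrite 2 [← Real.rpow_one ((n:ℝ) + 3)]
      rw [← Real.rpow_add hn3]; ring_nf
    have ecast : ((n + 1 : ℕ) : ℝ) + 2 = (n:ℝ) + 3 := by push_cast; ring
    show g α (n + 3) ≤ 2 * (((n + 1 : ℕ) : ℝ) + 2) ^ (α - 1)
    rw [ecast, hrec]
    rw [div_le_iff₀ hn3]
    calc 2 * α * g α (n + 2) + ((n:ℝ) + 1) * g α (n + 1)
        ≤ 2 * (2 * α * ((n:ℝ) + 2) ^ (α - 1) + ((n:ℝ) + 1) ^ α) := hnum
      _ ≤ 2 * ((n:ℝ) + 3) ^ α := by linarith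
      _ = 2 * ((n:ℝ) + 3) ^ (α - 1) * ((n:ℝ) + 3) := by rw [hfin]; ring

theorem stmt7 (α : ℝ) (hα : α ∈ Set.Ioo (0:ℝ) 1) :
    ∃ C : ℝ, 0 < C ∧ ∀ n : ℕ, 1 ≤ n → g α n ≤ C / (n : ℝ) ^ (1 - α) := by
  refine ⟨2, by norm_num, fun n hn => ?_⟩
  obtain ⟨m, rfl⟩ : ∃ m, n = m + 1 := ⟨n - 1, by omega⟩
  have hb := (g_bound hα m).1
  have hn1 : (0:ℝ) < (m:ℝ) + 1 := by positivity
  have : ((m:ℝ) + 1) ^ (α - 1) = 1 / ((m:ℝ) + 1) ^ (1 - α) := by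
    rw [show α - 1 = -(1 - α) by ring, Real.rpow_neg hn1.le, one_div]
  rw [this] at hb
  push_cast
  calc g α (m + 1) ≤ 2 * (1 / ((m:ℝ) + 1) ^ (1 - α)) := hb
    _ = 2 / ((m:ℝ) + 1) ^ (1 - α) := by ring
end

section
/- For every α ∈ (0,1), the limit of n^{1-α} g_n(α) as n → ∞ equals 2^{α-1}/Γ(α+1), where Γ is the Euler Gamma function. -/
open Set Filter Real

open Finset Topology Nat

namespace Stmt9

noncomputable def A (β : ℝ) (n : ℕ) : ℝ := ∏ m ∈ Finset.range n, (β + m + 1) / (m + 1)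

lemma A_zero (β : ℝ) : A β 0 = 1 := by simp [A]

lemma A_succ (β : ℝ) (n : ℕ) : A β (n + 1) = A β n * ((β + n + 1) / (n + 1)) :=
  Finset.prod_range_succ _ _

lemma A_pos {β : ℝ} (hβ : -1 < β) (n : ℕ) : 0 < A β n := by
  refine Finset.prod_pos fun m _ => div_pos ?_ (by positivity)
  have : (0:ℝ) ≤ m := Nat.cast_nonneg m
  linarith

lemma A_mono {β : ℝ} (hβ : 0 ≤ β) : Monotone (A β) := by
  refine monotone_nat_of_le_succ fun n => ?_
  rw [A_succ]
  have h1 : (0:ℝ) < A β n := A_pos (by linarith) n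
  have h2 : (1:ℝ) ≤ (β + n + 1) / (n + 1) := by
    rw [le_div_iff₀ (by positivity)]
    have : (0:ℝ) ≤ n := Nat.cast_nonneg n
    linarith
  nlinarith

lemma A_succ_mul (β : ℝ) (n : ℕ) :
    ((n:ℝ) + 1) * A β (n + 1) = (β + n + 1) * A β n := by
  rw [A_succ]
  field_simp

lemma gammaSeq_mul_A {β : ℝ} (hβ0 : β ≠ 0) (hβ1 : -1 < β) (n : ℕ) :
    Real.GammaSeq β n * (β * A β n) = (n:ℝ) ^ β := by
  have hfac : ((n ! : ℕ) : ℝ) = ∏ m ∈ Finset.range n, ((m:ℝ) + 1) := by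
    rw [← Finset.prod_range_add_one_eq_factorial, Nat.cast_prod]
    push_cast
    rfl
  have hA : A β n * (n ! : ℝ) = ∏ m ∈ Finset.range n, (β + m + 1) := by
    rw [A, hfac, ← Finset.prod_mul_distrib]
    refine Finset.prod_congr rfl fun m _ => ?_
    have : ((m:ℝ) + 1) ≠ 0 := by positivity
    field_simp
  have hP : ∏ j ∈ Finset.range (n + 1), (β + j) = β * (A β n * (n ! : ℝ)) := by
    have h2 : (∏ i ∈ Finset.range n, (β + ((i + 1 : ℕ) : ℝ))) =
        ∏ m ∈ Finset.range n, (β + m + 1) :=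
      Finset.prod_congr rfl fun m _ => by push_cast; ring
    rw [Finset.prod_range_succ', h2, hA]
    push_cast
    ring
  have hA0 : A β n ≠ 0 := ne_of_gt (A_pos hβ1 n)
  have hn : ((n ! : ℕ) : ℝ) ≠ 0 := by positivity
  rw [Real.GammaSeq, hP]
  field_simp

lemma A_div_rpow_tendsto {β : ℝ} (hβ0 : β ≠ 0) (hβ1 : -1 < β) :
    Tendsto (fun n : ℕ => A β n / (n:ℝ) ^ β) atTop (𝓝 (1 / Real.Gamma (β + 1))) := by
  have hΓ : Real.Gamma β ≠ 0 := by
    refine Real.Gamma_ne_zero fun m => ?_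
    cases m with
    | zero => simpa using hβ0
    | succ k =>
      intro h
      rw [h] at hβ1
      push_cast at hβ1
      linarith
  have hne : β * Real.Gamma β ≠ 0 := mul_ne_zero hβ0 hΓ
  have hG : Tendsto (fun n => (β * Real.GammaSeq β n)⁻¹) atTop (𝓝 (β * Real.Gamma β)⁻¹) :=
    ((Real.GammaSeq_tendsto_Gamma β).const_mul β).inv₀ hne
  have heq : (fun n : ℕ => A β n / (n:ℝ) ^ β) =ᶠ[atTop] fun n => (β * Real.GammaSeq β n)⁻¹ := by
    filter_upwards [eventually_ge_atTop 1] with n hn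
    have hnp : (0:ℝ) < (n:ℝ) ^ β := Real.rpow_pos_of_pos (by exact_mod_cast hn) β
    have hA0 : A β n ≠ 0 := ne_of_gt (A_pos hβ1 n)
    have := gammaSeq_mul_A hβ0 hβ1 n
    have hb : β * Real.GammaSeq β n = (n:ℝ) ^ β / A β n := by
      field_simp
      linarith [this]
    rw [hb, inv_div]
  have hval : (β * Real.Gamma β)⁻¹ = 1 / Real.Gamma (β + 1) := by
    rw [Real.Gamma_add_one hβ0, one_div]
  rw [← hval]
  exact hG.congr' heq.symm

lemma A_neg_tendsto_zero {α : ℝ} (hα : α ∈ Set.Ioo (0:ℝ) 1) :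
    Tendsto (A (-α)) atTop (𝓝 0) := by
  obtain ⟨h0, h1⟩ := hα
  have h := A_div_rpow_tendsto (β := -α) (by linarith) (by linarith)
  have hr : Tendsto (fun n : ℕ => ((n:ℝ)) ^ (-α)) atTop (𝓝 0) := by
    have := tendsto_rpow_neg_atTop h0
    exact this.comp tendsto_natCast_atTop_atTop
  have := h.mul hr
  rw [mul_zero] at this
  refine this.congr' ?_
  filter_upwards [eventually_ge_atTop 1] with n hn
  have hnp : ((n:ℝ)) ^ (-α) ≠ 0 := ne_of_gt (Real.rpow_pos_of_pos (by exact_mod_cast hn) _)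
  field_simp

lemma A_neg_antitone {α : ℝ} (hα : α ∈ Set.Ioo (0:ℝ) 1) : Antitone (A (-α)) := by
  obtain ⟨h0, h1⟩ := hα
  refine antitone_nat_of_succ_le fun n => ?_
  rw [A_succ]
  have h1' : (0:ℝ) < A (-α) n := A_pos (by linarith) n
  have h2 : (-α + n + 1) / (n + 1) ≤ 1 := by
    rw [div_le_one (by positivity)]
    linarith
  nlinarith

noncomputable def C (α : ℝ) (k : ℕ) : ℝ := (-1) ^ k * A (-α) k

lemma C_zero (α : ℝ) : C α 0 = 1 := by simp [C, A_zero]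

lemma C_succ_mul (α : ℝ) (k : ℕ) :
    ((k:ℝ) + 1) * C α (k + 1) = (α - 1 - k) * C α k := by
  unfold C
  linear_combination ((-1:ℝ) ^ (k + 1)) * A_succ_mul (-α) k

noncomputable def D (α : ℝ) (n : ℕ) : ℝ := ∑ k ∈ Finset.range (n + 1), C α k * A α (n - k)

lemma D_zero (α : ℝ) : D α 0 = 1 := by simp [D, C_zero, A_zero]

lemma D_one (α : ℝ) : D α 1 = 2 * α := by
  have h1 : C α 1 = α - 1 := by
    have := C_succ_mul α 0
    rw [C_zero] at this
    push_cast at this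
    linarith
  simp [D, Finset.sum_range_succ, C_zero, A_zero, h1, A_succ]
  ring

lemma D_rec (α : ℝ) (n : ℕ) :
    ((n:ℝ) + 2) * D α (n + 2) = 2 * α * D α (n + 1) + ((n:ℝ) + 2) * D α n := by
  simp only [D]
  rw [Finset.mul_sum]
  have split1 : ∀ k ∈ Finset.range (n + 2 + 1), ((n:ℝ) + 2) * (C α k * A α (n + 2 - k))
      = (k:ℝ) * C α k * A α (n + 2 - k) + ((n:ℝ) + 2 - k) * C α k * A α (n + 2 - k) :=
    fun k _ => by ring
  rw [Finset.sum_congr rfl split1, Finset.sum_add_distrib]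
  have hS1 : ∑ k ∈ Finset.range (n + 2 + 1), (k:ℝ) * C α k * A α (n + 2 - k)
      = ∑ k ∈ Finset.range (n + 2), (α - 1 - k) * C α k * A α (n + 1 - k) := by
    rw [Finset.sum_range_succ']
    simp only [Nat.cast_zero, zero_mul, add_zero]
    refine Finset.sum_congr rfl fun k hk => ?_
    have h1 : n + 2 - (k + 1) = n + 1 - k := by omega
    rw [h1]
    push_cast
    linear_combination (A α (n + 1 - k)) * C_succ_mul α k
  have hS2 : ∑ k ∈ Finset.range (n + 2 + 1), ((n:ℝ) + 2 - k) * C α k * A α (n + 2 - k)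
      = ∑ k ∈ Finset.range (n + 2), (α + ((n:ℝ) + 2 - k)) * C α k * A α (n + 1 - k) := by
    rw [Finset.sum_range_succ]
    rw [show ((n:ℝ) + 2 - ((n + 2 : ℕ) : ℝ)) * C α (n + 2) * A α (n + 2 - (n + 2)) = 0 by
      push_cast; ring]
    rw [add_zero]
    refine Finset.sum_congr rfl fun k hk => ?_
    rw [Finset.mem_range] at hk
    have hk' : k ≤ n + 1 := by omega
    have h1 : n + 2 - k = (n + 1 - k) + 1 := by omega
    rw [h1]
    have h2 : ((n + 1 - k : ℕ) : ℝ) = (n:ℝ) + 1 - k := by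
      rw [Nat.cast_sub (by omega)]; push_cast; ring
    have h3 := A_succ_mul α (n + 1 - k)
    rw [h2] at h3
    linear_combination (C α k) * h3
  rw [hS1, hS2, ← Finset.sum_add_distrib]
  have split2 : ∀ k ∈ Finset.range (n + 2),
      ((α - 1 - (k:ℝ)) * C α k * A α (n + 1 - k)
        + (α + ((n:ℝ) + 2 - k)) * C α k * A α (n + 1 - k))
      = 2 * α * (C α k * A α (n + 1 - k))
        + (((n:ℝ) + 1 - k) * C α k * A α (n + 1 - k) - (k:ℝ) * C α k * A α (n + 1 - k)) :=
    fun k _ => by ring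
  rw [Finset.sum_congr rfl split2, Finset.sum_add_distrib, Finset.sum_sub_distrib, ← Finset.mul_sum]
  have hT1 : ∑ k ∈ Finset.range (n + 2), ((n:ℝ) + 1 - k) * C α k * A α (n + 1 - k)
      = ∑ k ∈ Finset.range (n + 1), (α + ((n:ℝ) + 1 - k)) * C α k * A α (n - k) := by
    rw [Finset.sum_range_succ]
    rw [show ((n:ℝ) + 1 - ((n + 1 : ℕ) : ℝ)) * C α (n + 1) * A α (n + 1 - (n + 1)) = 0 by
      push_cast; ring]
    rw [add_zero]
    refine Finset.sum_congr rfl fun k hk => ?_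
    rw [Finset.mem_range] at hk
    have hk' : k ≤ n := by omega
    have h1 : n + 1 - k = (n - k) + 1 := by omega
    rw [h1]
    have h2 : ((n - k : ℕ) : ℝ) = (n:ℝ) - k := by
      rw [Nat.cast_sub hk']
    have h3 := A_succ_mul α (n - k)
    rw [h2] at h3
    linear_combination (C α k) * h3
  have hT2 : ∑ k ∈ Finset.range (n + 2), (k:ℝ) * C α k * A α (n + 1 - k)
      = ∑ k ∈ Finset.range (n + 1), (α - 1 - k) * C α k * A α (n - k) := by
    rw [Finset.sum_range_succ']
    simp only [Nat.cast_zero, zero_mul, add_zero]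
    refine Finset.sum_congr rfl fun k hk => ?_
    have h1 : n + 1 - (k + 1) = n - k := by omega
    rw [h1]
    push_cast
    linear_combination (A α (n - k)) * C_succ_mul α k
  rw [hT1, hT2, ← Finset.sum_sub_distrib]
  congr 1
  rw [Finset.mul_sum]
  refine Finset.sum_congr rfl fun k hk => ?_
  ring

lemma g_two (α : ℝ) : g α 2 = α := by
  show (2 * α * g α 1 + ((0:ℕ):ℝ) * g α 0) / (((0:ℕ):ℝ) + 2) = α
  show (2 * α * 1 + ((0:ℕ):ℝ) * g α 0) / (((0:ℕ):ℝ) + 2) = α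
  norm_num

lemma D_eq_g (α : ℝ) : ∀ n : ℕ, D α n = ((n:ℝ) + 1) * g α (n + 1) := by
  have key : ∀ n : ℕ, D α n = ((n:ℝ) + 1) * g α (n + 1) ∧
      D α (n + 1) = ((n:ℝ) + 2) * g α (n + 2) := by
    intro n
    induction n with
    | zero =>
      constructor
      · simp [D_zero, g]
      · rw [D_one, g_two]
        norm_num
    | succ n ih =>
      obtain ⟨ih1, ih2⟩ := ih
      have e1 : n + 1 + 1 = n + 2 := rfl
      have e2 : n + 1 + 2 = n + 3 := rfl
      constructor
      · rw [e1, ih2]; push_cast; ring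
      rw [e1, e2]
      have hrec := D_rec α n
      have hg : g α (n + 3) = (2 * α * g α (n + 2) + ((n:ℝ) + 1) * g α (n + 1)) / ((n:ℝ) + 3) := by
        show g α ((n + 1) + 2) = _
        rw [show g α ((n + 1) + 2) = (2 * α * g α (n + 1 + 1) + ((n + 1 : ℕ) : ℝ) * g α (n + 1))
          / (((n + 1 : ℕ) : ℝ) + 2) from rfl]
        push_cast
        ring_nf
      have hne : ((n:ℝ) + 2) ≠ 0 := by positivity
      have : ((n:ℝ) + 2) * D α (n + 2) = ((n:ℝ) + 2) * (((n:ℝ) + 3) * g α (n + 3)) := by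
        rw [hrec, ih1, ih2, hg]
        have hne3 : ((n:ℝ) + 3) ≠ 0 := by positivity
        field_simp
      have h5 := mul_left_cancel₀ hne this
      rw [h5]
      push_cast
      ring
  exact fun n => (key n).1


/-! ### Section 4: binomial series, value of the alternating sum -/

lemma absC_le_one {α : ℝ} (hα : α ∈ Set.Ioo (0:ℝ) 1) (k : ℕ) : |C α k| ≤ 1 := by
  have h1 : |C α k| = A (-α) k := by
    rw [C, abs_mul, abs_pow, abs_neg, abs_one, one_pow, one_mul,
      abs_of_pos (A_pos (by linarith [hα.2]) k)]
  rw [h1]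
  have h2 := A_neg_antitone hα (Nat.zero_le k)
  rwa [A_zero] at h2

lemma summable_CX {α : ℝ} (hα : α ∈ Set.Ioo (0:ℝ) 1) {x : ℝ} (hx : |x| < 1) :
    Summable fun k => C α k * x ^ k := by
  refine Summable.of_norm (Summable.of_nonneg_of_le (fun n => norm_nonneg _) (fun n => ?_)
    (summable_geometric_of_lt_one (abs_nonneg x) hx))
  rw [norm_mul, norm_pow, Real.norm_eq_abs, Real.norm_eq_abs]
  calc |C α n| * |x| ^ n ≤ 1 * |x| ^ n := by
        gcongr
        exact absC_le_one hα n
    _ = |x| ^ n := one_mul _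

lemma summable_geom_aux {x : ℝ} (hx : |x| < 1) (hx0 : 0 ≤ x) :
    Summable (fun n : ℕ => (n:ℝ) * x ^ (n - 1)) := by
  rw [← summable_nat_add_iff 1]
  simp only [Nat.add_sub_cancel]
  have h1 := summable_pow_mul_geometric_of_norm_lt_one (R := ℝ) 1 (r := x)
    (by rwa [Real.norm_eq_abs])
  simp only [pow_one] at h1
  have h2 : Summable fun n : ℕ => x ^ n := summable_geometric_of_lt_one hx0 (by
    calc x ≤ |x| := le_abs_self x
      _ < 1 := hx)
  refine (h1.add h2).congr fun n => ?_
  push_cast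
  ring

lemma summable_mulCX {α : ℝ} (hα : α ∈ Set.Ioo (0:ℝ) 1) {x : ℝ} (hx : |x| < 1) :
    Summable fun k : ℕ => (k:ℝ) * (C α k * x ^ k) := by
  have h1 := summable_pow_mul_geometric_of_norm_lt_one (R := ℝ) 1 (r := |x|)
    (by rwa [Real.norm_eq_abs, abs_abs])
  simp only [pow_one] at h1
  refine Summable.of_norm (Summable.of_nonneg_of_le (fun n => norm_nonneg _) (fun n => ?_) h1)
  rw [norm_mul, norm_mul, norm_pow, Real.norm_eq_abs, Real.norm_eq_abs, Real.norm_eq_abs]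
  calc |(n:ℝ)| * (|C α n| * |x| ^ n) ≤ |(n:ℝ)| * (1 * |x| ^ n) := by
        gcongr
        exact absC_le_one hα n
    _ = (n:ℝ) * |x| ^ n := by rw [abs_of_nonneg (Nat.cast_nonneg n)]; ring

lemma summable_derCX {α : ℝ} (hα : α ∈ Set.Ioo (0:ℝ) 1) {x : ℝ} (hx : |x| < 1) :
    Summable fun k => C α k * ((k:ℝ) * x ^ (k - 1)) := by
  refine Summable.of_norm (Summable.of_nonneg_of_le (fun n => norm_nonneg _) (fun n => ?_)
    (summable_geom_aux (x := |x|) (by rwa [abs_abs]) (abs_nonneg x)))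
  rw [norm_mul, norm_mul, norm_pow, Real.norm_eq_abs, Real.norm_eq_abs, Real.norm_eq_abs]
  calc |C α n| * (|(n:ℝ)| * |x| ^ (n - 1)) ≤ 1 * (|(n:ℝ)| * |x| ^ (n - 1)) := by
        gcongr
        exact absC_le_one hα n
    _ = (n:ℝ) * |x| ^ (n - 1) := by rw [abs_of_nonneg (Nat.cast_nonneg n)]; ring

noncomputable def Y (α : ℝ) (x : ℝ) : ℝ := ∑' k : ℕ, C α k * x ^ k

lemma hasDerivAt_Y {α : ℝ} (hα : α ∈ Set.Ioo (0:ℝ) 1) {x : ℝ} (hx : x ∈ Set.Ioo (-1:ℝ) 1) :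
    HasDerivAt (Y α) (∑' k : ℕ, C α k * ((k:ℝ) * x ^ (k - 1))) x := by
  obtain ⟨hx1, hx2⟩ := hx
  have hxa : |x| < 1 := abs_lt.mpr ⟨hx1, hx2⟩
  set ρ : ℝ := (1 + |x|) / 2 with hρdef
  have hxρ : |x| < ρ := by rw [hρdef]; linarith
  have hρ1 : ρ < 1 := by rw [hρdef]; linarith
  have hρ0 : 0 ≤ ρ := by positivity
  have hρa : |ρ| < 1 := by rwa [abs_of_nonneg hρ0]
  have hu : Summable (fun n : ℕ => (n:ℝ) * ρ ^ (n - 1)) := summable_geom_aux hρa hρ0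
  have hρpos : (0:ℝ) < ρ := by
    have := abs_nonneg x
    rw [hρdef]; linarith
  have h0mem : (0:ℝ) ∈ Set.Ioo (-ρ) ρ := ⟨by linarith, hρpos⟩
  refine hasDerivAt_tsum_of_isPreconnected hu (isOpen_Ioo (a := -ρ) (b := ρ))
    ((convex_Ioo _ _).isPreconnected) (fun n y _ => (hasDerivAt_pow n y).const_mul (C α n))
    (fun n y hy => ?_) h0mem ?_ (abs_lt.mp hxρ |> fun h => ⟨h.1, h.2⟩)
  · rw [Real.norm_eq_abs, abs_mul, abs_mul, abs_pow]
    have hyρ : |y| ≤ ρ := le_of_lt (abs_lt.mpr ⟨hy.1, hy.2⟩)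
    have h1 := absC_le_one hα n
    have h2 : |y| ^ (n - 1) ≤ ρ ^ (n - 1) := pow_le_pow_left₀ (abs_nonneg y) hyρ _
    have h3 : |(n:ℝ)| = (n:ℝ) := abs_of_nonneg (Nat.cast_nonneg n)
    calc |C α n| * (|(n:ℝ)| * |y| ^ (n - 1)) ≤ 1 * ((n:ℝ) * ρ ^ (n - 1)) := by
          rw [h3]
          refine mul_le_mul h1 ?_ (by positivity) zero_le_one
          exact mul_le_mul_of_nonneg_left h2 (Nat.cast_nonneg n)
      _ = (n:ℝ) * ρ ^ (n - 1) := one_mul _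
  · exact summable_CX hα (x := 0) (by norm_num)

lemma ode {α : ℝ} (hα : α ∈ Set.Ioo (0:ℝ) 1) {x : ℝ} (hx : x ∈ Set.Ioo (-1:ℝ) 1) :
    (1 + x) * (∑' k : ℕ, C α k * ((k:ℝ) * x ^ (k - 1))) = (α - 1) * Y α x := by
  have hxa : |x| < 1 := abs_lt.mpr ⟨hx.1, hx.2⟩
  have hs0 : Summable fun k => C α k * x ^ k := summable_CX hα hxa
  have hs1 : Summable fun k : ℕ => (k:ℝ) * (C α k * x ^ k) := summable_mulCX hα hxa
  have hsd : Summable fun k => C α k * ((k:ℝ) * x ^ (k - 1)) := summable_derCX hα hxa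
  have ht1 : ∑' k : ℕ, C α k * ((k:ℝ) * x ^ (k - 1))
      = ∑' k, ((α - 1) * (C α k * x ^ k) - (k:ℝ) * (C α k * x ^ k)) := by
    rw [Summable.tsum_eq_zero_add hsd]
    simp only [Nat.cast_zero, zero_mul, mul_zero, zero_add, Nat.add_sub_cancel]
    refine tsum_congr fun k => ?_
    push_cast
    linear_combination (x ^ k) * C_succ_mul α k
  have hx_t1 : x * (∑' k : ℕ, C α k * ((k:ℝ) * x ^ (k - 1))) = ∑' k : ℕ, (k:ℝ) * (C α k * x ^ k) := by
    rw [← tsum_mul_left]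
    refine tsum_congr fun k => ?_
    cases k with
    | zero => simp
    | succ m =>
      simp only [Nat.add_sub_cancel]
      push_cast
      rw [pow_succ]
      ring
  have hsplit : ∑' k, ((α - 1) * (C α k * x ^ k) - (k:ℝ) * (C α k * x ^ k))
      = (α - 1) * Y α x - ∑' k : ℕ, (k:ℝ) * (C α k * x ^ k) := by
    rw [Summable.tsum_sub (hs0.mul_left (α - 1)) hs1, tsum_mul_left]
    rfl
  have expand : (1 + x) * (∑' k : ℕ, C α k * ((k:ℝ) * x ^ (k - 1)))
      = (∑' k : ℕ, C α k * ((k:ℝ) * x ^ (k - 1)))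
        + x * (∑' k : ℕ, C α k * ((k:ℝ) * x ^ (k - 1))) := by ring
  rw [expand, hx_t1, ht1, hsplit]
  ring

lemma Y_eq {α : ℝ} (hα : α ∈ Set.Ioo (0:ℝ) 1) {x : ℝ} (hx : x ∈ Set.Ioo (-1:ℝ) 1) :
    Y α x = (1 + x) ^ (α - 1) := by
  have h1x : (0:ℝ) < 1 + x := by linarith [hx.1]
  have hF : ∀ y ∈ Set.Ioo (-1:ℝ) 1,
      HasDerivAt (fun z => Y α z * (1 + z) ^ (1 - α)) 0 y := by
    intro y hy
    have h1y : (0:ℝ) < 1 + y := by linarith [hy.1]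
    have hY := hasDerivAt_Y hα hy
    have hr : HasDerivAt (fun z : ℝ => (1 + z) ^ (1 - α)) ((1 - α) * (1 + y) ^ (1 - α - 1)) y := by
      have h := Real.hasDerivAt_rpow_const (x := 1 + y) (p := 1 - α) (Or.inl (ne_of_gt h1y))
      have hc : HasDerivAt (fun z : ℝ => 1 + z) 1 y := (hasDerivAt_id y).const_add 1
      have h2 := h.comp y hc
      rw [mul_one] at h2
      exact h2
    have hprod := hY.mul hr
    have hkey : (∑' k : ℕ, C α k * ((k:ℝ) * y ^ (k - 1))) * (1 + y) ^ (1 - α)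
        + Y α y * ((1 - α) * (1 + y) ^ (1 - α - 1)) = 0 := by
      have hode := ode hα hy
      have hpow : (1 + y) ^ (1 - α) = (1 + y) ^ (1 - α - 1) * (1 + y) := by
        rw [← Real.rpow_add_one (ne_of_gt h1y) (1 - α - 1)]
        congr 1
        ring
      rw [hpow]
      have : (∑' k : ℕ, C α k * ((k:ℝ) * y ^ (k - 1))) * ((1 + y) ^ (1 - α - 1) * (1 + y))
          = ((1 + y) * (∑' k : ℕ, C α k * ((k:ℝ) * y ^ (k - 1)))) * (1 + y) ^ (1 - α - 1) := by ring
      rw [this, hode]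
      ring
    rw [← hkey]
    exact hprod
  have hconv : Convex ℝ (Set.Ioo (-1:ℝ) 1) := convex_Ioo _ _
  have h0mem : (0:ℝ) ∈ Set.Ioo (-1:ℝ) 1 := by norm_num
  have hbound := hconv.norm_image_sub_le_of_norm_hasDerivWithin_le
    (f := fun z => Y α z * (1 + z) ^ (1 - α)) (f' := fun _ => 0) (C := 0)
    (fun y hy => (hF y hy).hasDerivWithinAt) (fun y _ => by simp) h0mem hx
  simp only [norm_zero, zero_mul, norm_le_zero_iff, sub_eq_zero] at hbound
  have hY0 : Y α 0 = 1 := by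
    rw [Y]
    rw [tsum_eq_single 0 (fun b hb => by simp [zero_pow hb])]
    simp [C_zero]
  rw [hY0] at hbound
  simp only [add_zero, Real.one_rpow, one_mul] at hbound
  -- hbound : Y α x * (1 + x) ^ (1 - α) = 1
  have hinv : (1 + x) ^ (1 - α) * (1 + x) ^ (α - 1) = 1 := by
    rw [← Real.rpow_add h1x, show (1 - α) + (α - 1) = 0 by ring, Real.rpow_zero]
  calc Y α x = Y α x * ((1 + x) ^ (1 - α) * (1 + x) ^ (α - 1)) := by rw [hinv, mul_one]
    _ = (Y α x * (1 + x) ^ (1 - α)) * (1 + x) ^ (α - 1) := by ring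
    _ = (1 + x) ^ (α - 1) := by rw [hbound, one_mul]

lemma tendsto_partial_sum_C {α : ℝ} (hα : α ∈ Set.Ioo (0:ℝ) 1) :
    Tendsto (fun n => ∑ i ∈ Finset.range n, C α i) atTop (𝓝 ((2:ℝ) ^ (α - 1))) := by
  obtain ⟨l, hl⟩ := (A_neg_antitone hα).tendsto_alternating_series_of_tendsto_zero
    (A_neg_tendsto_zero hα)
  have hl' : Tendsto (fun n => ∑ i ∈ Finset.range n, C α i) atTop (𝓝 l) := by
    refine hl.congr fun n => Finset.sum_congr rfl fun i _ => ?_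
    rw [C]
  suffices hls : l = (2:ℝ) ^ (α - 1) by rwa [hls] at hl'
  have habel := Real.tendsto_tsum_powerSeries_nhdsWithin_lt hl'
  have hcont : Tendsto (fun x : ℝ => (1 + x) ^ (α - 1)) (𝓝[<] (1:ℝ)) (𝓝 ((2:ℝ) ^ (α - 1))) := by
    have hca : ContinuousAt (fun x : ℝ => (1 + x) ^ (α - 1)) 1 := by
      have h2 : (1:ℝ) + 1 ≠ 0 := by norm_num
      exact ContinuousAt.rpow_const (by fun_prop) (Or.inl h2)
    have h3 := hca.tendsto
    have h4 : ((1:ℝ) + 1) ^ (α - 1) = (2:ℝ) ^ (α - 1) := by norm_num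
    rw [h4] at h3
    exact h3.mono_left nhdsWithin_le_nhds
  have heq : (fun x : ℝ => ∑' n, C α n * x ^ n) =ᶠ[𝓝[<] (1:ℝ)] fun x => (1 + x) ^ (α - 1) := by
    filter_upwards [Ioo_mem_nhdsLT_of_mem (show (1:ℝ) ∈ Set.Ioc 0 1 by norm_num)] with x hx
    exact Y_eq hα ⟨by linarith [hx.1], hx.2⟩
  exact tendsto_nhds_unique (habel.congr' heq) hcont

/-! ### Section 5: Abel summation and the limit of `D n / n^α` -/

noncomputable def T (α : ℝ) (n : ℕ) : ℝ := ∑ i ∈ Finset.range n, C α i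

lemma abel_identity (α : ℝ) (n : ℕ) :
    D α n = T α (n + 1) * A α 0
      + ∑ k ∈ Finset.range n, T α (k + 1) * (A α (n - k) - A α (n - (k + 1))) := by
  have hC : ∀ k, C α k = T α (k + 1) - T α k := fun k => by
    rw [T, T, Finset.sum_range_succ]; ring
  have step1 : D α n = ∑ k ∈ Finset.range (n + 1), T α (k + 1) * A α (n - k)
      - ∑ k ∈ Finset.range (n + 1), T α k * A α (n - k) := by
    rw [← Finset.sum_sub_distrib, D]
    exact Finset.sum_congr rfl fun k _ => by rw [hC k]; ring
  rw [step1, Finset.sum_range_succ (fun k => T α (k + 1) * A α (n - k)) n,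
    Finset.sum_range_succ' (fun k => T α k * A α (n - k)) n]
  simp only [Nat.sub_self]
  have hT0 : T α 0 = 0 := by simp [T]
  rw [hT0, zero_mul, add_zero]
  have hZ : ∑ k ∈ Finset.range n, T α (k + 1) * (A α (n - k) - A α (n - (k + 1)))
      = ∑ k ∈ Finset.range n, T α (k + 1) * A α (n - k)
        - ∑ k ∈ Finset.range n, T α (k + 1) * A α (n - (k + 1)) := by
    rw [← Finset.sum_sub_distrib]
    exact Finset.sum_congr rfl fun k _ => by ring
  rw [hZ]
  ring

lemma telescope (α : ℝ) (n : ℕ) : ∀ K, K ≤ n →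
    ∑ k ∈ Finset.range K, (A α (n - k) - A α (n - (k + 1))) = A α n - A α (n - K) := by
  intro K
  induction K with
  | zero => simp
  | succ m ih =>
    intro hm
    rw [Finset.sum_range_succ, ih (by omega)]
    ring

lemma E_formula (α : ℝ) (S : ℝ) (n : ℕ) :
    D α n - S * A α n = (T α (n + 1) - S)
      + ∑ k ∈ Finset.range n, (T α (k + 1) - S) * (A α (n - k) - A α (n - (k + 1))) := by
  have ht := telescope α n n le_rfl
  rw [Nat.sub_self, A_zero] at ht
  have expand : ∑ k ∈ Finset.range n, (T α (k + 1) - S) * (A α (n - k) - A α (n - (k + 1)))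
      = ∑ k ∈ Finset.range n, T α (k + 1) * (A α (n - k) - A α (n - (k + 1)))
        - S * ∑ k ∈ Finset.range n, (A α (n - k) - A α (n - (k + 1))) := by
    rw [Finset.mul_sum, ← Finset.sum_sub_distrib]
    exact Finset.sum_congr rfl fun k _ => by ring
  rw [abel_identity, A_zero, mul_one, expand, ht]
  ring

lemma tendsto_D_div {α : ℝ} (hα : α ∈ Set.Ioo (0:ℝ) 1) :
    Tendsto (fun n : ℕ => D α n / (n:ℝ) ^ α) atTop
      (𝓝 ((2:ℝ) ^ (α - 1) / Real.Gamma (α + 1))) := by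
  obtain ⟨hα0, hα1⟩ := hα
  set S : ℝ := (2:ℝ) ^ (α - 1) with hSdef
  set L : ℝ := 1 / Real.Gamma (α + 1) with hLdef
  have hΓpos : 0 < Real.Gamma (α + 1) := Real.Gamma_pos_of_pos (by linarith)
  have hL0 : 0 ≤ L := by rw [hLdef]; positivity
  have hA : Tendsto (fun n : ℕ => A α n / (n:ℝ) ^ α) atTop (𝓝 L) :=
    A_div_rpow_tendsto (ne_of_gt hα0) (by linarith)
  have hT : Tendsto (T α) atTop (𝓝 S) := tendsto_partial_sum_C ⟨hα0, hα1⟩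
  obtain ⟨M, hM⟩ : ∃ M : ℝ, ∀ k, |T α k - S| ≤ M := by
    obtain ⟨M, hM⟩ := ((hT.sub_const S).abs).bddAbove_range
    exact ⟨M, fun k => hM ⟨k, rfl⟩⟩
  have hM0 : 0 ≤ M := le_trans (abs_nonneg _) (hM 0)
  have hshift : ∀ K : ℕ, Tendsto (fun n : ℕ => A α (n - K) / (n:ℝ) ^ α) atTop (𝓝 L) := by
    intro K
    have h1 : Tendsto (fun n : ℕ => A α (n - K) / ((n - K : ℕ) : ℝ) ^ α) atTop (𝓝 L) :=
      hA.comp (tendsto_sub_atTop_nat K)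
    have h2 : Tendsto (fun n : ℕ => (((n - K : ℕ) : ℝ) / (n : ℝ)) ^ α) atTop (𝓝 1) := by
      have h3 : Tendsto (fun n : ℕ => ((n - K : ℕ) : ℝ) / (n : ℝ)) atTop (𝓝 1) := by
        have h4 : Tendsto (fun n : ℕ => 1 - (K : ℝ) / (n : ℝ)) atTop (𝓝 1) := by
          have h6 := tendsto_const_div_atTop_nhds_zero_nat (K : ℝ)
          have h5 := (tendsto_const_nhds (x := (1:ℝ)) (f := (atTop : Filter ℕ))).sub h6
          simpa using h5
        refine h4.congr' ?_
        filter_upwards [eventually_ge_atTop (K + 1)] with n hn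
        have hn0 : (0:ℝ) < (n:ℝ) := by
          have : 0 < n := by omega
          exact_mod_cast this
        rw [Nat.cast_sub (by omega)]
        field_simp
      have hcont : ContinuousAt (fun x : ℝ => x ^ α) 1 :=
        Real.continuousAt_rpow_const 1 α (Or.inl one_ne_zero)
      have h7 := hcont.tendsto.comp h3
      simpa [Real.one_rpow, Function.comp_def] using h7
    have h8 := h1.mul h2
    rw [mul_one] at h8
    refine h8.congr' ?_
    filter_upwards [eventually_ge_atTop (K + 1)] with n hn
    have hnK : (0:ℝ) < ((n - K : ℕ) : ℝ) := by
      have : 0 < n - K := by omega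
      exact_mod_cast this
    have hn0 : (0:ℝ) < (n : ℝ) := by
      have : 0 < n := by omega
      exact_mod_cast this
    rw [Real.div_rpow (le_of_lt hnK) (le_of_lt hn0)]
    have hne : ((n - K : ℕ) : ℝ) ^ α ≠ 0 := ne_of_gt (Real.rpow_pos_of_pos hnK α)
    field_simp
  have hE : Tendsto (fun n : ℕ => (D α n - S * A α n) / (n:ℝ) ^ α) atTop (𝓝 0) := by
    rw [NormedAddCommGroup.tendsto_nhds_zero]
    intro ε hε
    have hden : (0:ℝ) < L + 3 := by linarith
    set ε' : ℝ := ε / (2 * (L + 3)) with hε'def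
    have hε'pos : 0 < ε' := by rw [hε'def]; positivity
    set ε'' : ℝ := ε' / (M + 1) with hε''def
    have hε''pos : 0 < ε'' := by rw [hε''def]; positivity
    obtain ⟨K, hK⟩ := Metric.tendsto_atTop.mp hT ε' hε'pos
    have hwnonneg : ∀ n k : ℕ, 0 ≤ A α (n - k) - A α (n - (k + 1)) := fun n k =>
      sub_nonneg.mpr (A_mono (le_of_lt hα0) (Nat.sub_le_sub_left (Nat.le_succ k) n))
    have hbound : ∀ n : ℕ, K + 1 ≤ n →
        |D α n - S * A α n| ≤ ε' + M * (A α n - A α (n - K)) + ε' * A α n := by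
      intro n hn
      have hKn : K ≤ n := by omega
      rw [E_formula α S n]
      have h1 : |T α (n + 1) - S| ≤ ε' := le_of_lt (by
        have := hK (n + 1) (by omega)
        rwa [Real.dist_eq] at this)
      have h2 : |∑ k ∈ Finset.range n, (T α (k + 1) - S) * (A α (n - k) - A α (n - (k + 1)))|
          ≤ M * (A α n - A α (n - K)) + ε' * A α n := by
        calc |∑ k ∈ Finset.range n, (T α (k + 1) - S) * (A α (n - k) - A α (n - (k + 1)))|
            ≤ ∑ k ∈ Finset.range n, |(T α (k + 1) - S) * (A α (n - k) - A α (n - (k + 1)))| :=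
              Finset.abs_sum_le_sum_abs _ _
          _ = ∑ k ∈ Finset.range n, |T α (k + 1) - S| * (A α (n - k) - A α (n - (k + 1))) := by
              refine Finset.sum_congr rfl fun k _ => ?_
              rw [abs_mul, abs_of_nonneg (hwnonneg n k)]
          _ = (∑ k ∈ Finset.Ico 0 K, |T α (k + 1) - S| * (A α (n - k) - A α (n - (k + 1))))
              + ∑ k ∈ Finset.Ico K n, |T α (k + 1) - S| * (A α (n - k) - A α (n - (k + 1))) := by
              rw [Finset.range_eq_Ico, ← Finset.sum_Ico_consecutive _ (Nat.zero_le K) hKn]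
          _ ≤ M * (A α n - A α (n - K)) + ε' * A α n := by
              have htel := telescope α n K hKn
              have hp1 : (∑ k ∈ Finset.Ico 0 K,
                    |T α (k + 1) - S| * (A α (n - k) - A α (n - (k + 1))))
                  ≤ M * (A α n - A α (n - K)) := by
                rw [← Finset.range_eq_Ico]
                calc ∑ k ∈ Finset.range K, |T α (k + 1) - S| * (A α (n - k) - A α (n - (k + 1)))
                    ≤ ∑ k ∈ Finset.range K, M * (A α (n - k) - A α (n - (k + 1))) :=
                      Finset.sum_le_sum fun k _ =>
                        mul_le_mul_of_nonneg_right (hM (k + 1)) (hwnonneg n k)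
                  _ = M * ∑ k ∈ Finset.range K, (A α (n - k) - A α (n - (k + 1))) :=
                      (Finset.mul_sum _ _ _).symm
                  _ = M * (A α n - A α (n - K)) := by rw [htel]
              have hp2 : (∑ k ∈ Finset.Ico K n,
                    |T α (k + 1) - S| * (A α (n - k) - A α (n - (k + 1))))
                  ≤ ε' * A α n := by
                have hIco : ∑ k ∈ Finset.Ico K n, (A α (n - k) - A α (n - (k + 1)))
                    = A α (n - K) - 1 := by
                  have e1 := telescope α n n le_rfl
                  rw [Nat.sub_self, A_zero] at e1
                  rw [Finset.range_eq_Ico] at e1 htel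
                  have e3 := Finset.sum_Ico_consecutive
                    (f := fun k => A α (n - k) - A α (n - (k + 1))) (Nat.zero_le K) hKn
                  rw [htel, e1] at e3
                  linarith
                calc ∑ k ∈ Finset.Ico K n, |T α (k + 1) - S| * (A α (n - k) - A α (n - (k + 1)))
                    ≤ ∑ k ∈ Finset.Ico K n, ε' * (A α (n - k) - A α (n - (k + 1))) := by
                      refine Finset.sum_le_sum fun k hk => ?_
                      have hkK : K ≤ k := (Finset.mem_Ico.mp hk).1
                      have hd := hK (k + 1) (by omega)
                      rw [Real.dist_eq] at hd
                      exact mul_le_mul_of_nonneg_right (le_of_lt hd) (hwnonneg n k)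
                  _ = ε' * ∑ k ∈ Finset.Ico K n, (A α (n - k) - A α (n - (k + 1))) :=
                      (Finset.mul_sum _ _ _).symm
                  _ = ε' * (A α (n - K) - 1) := by rw [hIco]
                  _ ≤ ε' * A α n := by
                      refine mul_le_mul_of_nonneg_left ?_ (le_of_lt hε'pos)
                      have := A_mono (le_of_lt hα0) (Nat.sub_le n K)
                      linarith
              linarith
      calc |T α (n + 1) - S + ∑ k ∈ Finset.range n, (T α (k + 1) - S) * (A α (n - k) - A α (n - (k + 1)))|
          ≤ |T α (n + 1) - S| + |∑ k ∈ Finset.range n, (T α (k + 1) - S) * (A α (n - k) - A α (n - (k + 1)))| :=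
            abs_add_le _ _
        _ ≤ ε' + (M * (A α n - A α (n - K)) + ε' * A α n) := add_le_add h1 h2
        _ = ε' + M * (A α n - A α (n - K)) + ε' * A α n := by ring
    have hdiff := hA.sub (hshift K)
    rw [sub_self] at hdiff
    have hdiff' : ∀ᶠ n in atTop,
        |A α n / (n:ℝ) ^ α - A α (n - K) / (n:ℝ) ^ α| < ε'' := by
      have h9 := (NormedAddCommGroup.tendsto_nhds_zero.mp hdiff) ε'' hε''pos
      simpa [Real.norm_eq_abs] using h9
    have hA' : ∀ᶠ n in atTop, A α n / (n:ℝ) ^ α ≤ L + 1 := by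
      obtain ⟨N, hN⟩ := Metric.tendsto_atTop.mp hA 1 one_pos
      filter_upwards [eventually_ge_atTop N] with n hn
      have hd := hN n hn
      rw [Real.dist_eq] at hd
      linarith [(abs_lt.mp hd).2]
    filter_upwards [eventually_ge_atTop (K + 1), hdiff', hA', eventually_ge_atTop 1]
      with n hn1 hn2 hn3 hn4
    have hn0 : (0:ℝ) < (n:ℝ) := by
      have : 0 < n := by omega
      exact_mod_cast this
    have hnα : (1:ℝ) ≤ (n:ℝ) ^ α := Real.one_le_rpow (by exact_mod_cast hn4) (le_of_lt hα0)
    have hnα0 : (0:ℝ) < (n:ℝ) ^ α := lt_of_lt_of_le zero_lt_one hnα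
    rw [Real.norm_eq_abs, abs_div, abs_of_pos hnα0]
    have hb := hbound n hn1
    have step1 : |D α n - S * A α n| / (n:ℝ) ^ α
        ≤ (ε' + M * (A α n - A α (n - K)) + ε' * A α n) / (n:ℝ) ^ α := by gcongr
    have e1 : ε' / (n:ℝ) ^ α ≤ ε' := by
      rw [div_le_iff₀ hnα0]
      nlinarith
    have e2 : M * (A α n - A α (n - K)) / (n:ℝ) ^ α ≤ M * ε'' := by
      rw [mul_div_assoc]
      refine mul_le_mul_of_nonneg_left ?_ hM0
      rw [sub_div]
      exact le_trans (le_abs_self _) (le_of_lt hn2)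
    have e3 : ε' * A α n / (n:ℝ) ^ α ≤ ε' * (L + 1) := by
      rw [mul_div_assoc]
      exact mul_le_mul_of_nonneg_left hn3 (le_of_lt hε'pos)
    have hMe : M * ε'' ≤ ε' := by
      rw [hε''def]
      calc M * (ε' / (M + 1)) ≤ (M + 1) * (ε' / (M + 1)) := by
            refine mul_le_mul_of_nonneg_right (by linarith) ?_
            positivity
        _ = ε' := by field_simp
    calc |D α n - S * A α n| / (n:ℝ) ^ α
        ≤ (ε' + M * (A α n - A α (n - K)) + ε' * A α n) / (n:ℝ) ^ α := step1
      _ = ε' / (n:ℝ) ^ α + M * (A α n - A α (n - K)) / (n:ℝ) ^ α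
          + ε' * A α n / (n:ℝ) ^ α := by rw [_root_.add_div, _root_.add_div]
      _ ≤ ε' + M * ε'' + ε' * (L + 1) := add_le_add (add_le_add e1 e2) e3
      _ ≤ ε' + ε' + ε' * (L + 1) := by linarith
      _ = ε' * (L + 3) := by ring
      _ = ε / 2 := by
          rw [hε'def]
          field_simp
      _ < ε := by linarith
  have hsum := hE.add (hA.const_mul S)
  rw [zero_add] at hsum
  have hid : ∀ n : ℕ, (D α n - S * A α n) / (n:ℝ) ^ α + S * (A α n / (n:ℝ) ^ α)
      = D α n / (n:ℝ) ^ α := fun n => by ring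
  have hfinal := hsum.congr hid
  have hval : S * L = S / Real.Gamma (α + 1) := by
    rw [hLdef]
    ring
  rwa [hval] at hfinal

end Stmt9

theorem stmt9 (α : ℝ) (hα : α ∈ Set.Ioo (0:ℝ) 1) :
    Tendsto (fun n : ℕ => (n : ℝ) ^ (1 - α) * g α n) atTop
      (nhds ((2 : ℝ) ^ (α - 1) / Real.Gamma (α + 1))) := by
  obtain ⟨hα0, hα1⟩ := hα
  have hD := Stmt9.tendsto_D_div ⟨hα0, hα1⟩
  rw [← tendsto_add_atTop_iff_nat 1]
  have hg : ∀ n : ℕ, g α (n + 1) = Stmt9.D α n / ((n:ℝ) + 1) := by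
    intro n
    have h := Stmt9.D_eq_g α n
    have hne : ((n:ℝ) + 1) ≠ 0 := by positivity
    rw [h, mul_div_cancel_left₀ _ hne]
  have hq : Tendsto (fun n : ℕ => ((n:ℝ) / ((n:ℝ) + 1)) ^ α) atTop (𝓝 1) := by
    have h3 := tendsto_natCast_div_add_atTop (𝕜 := ℝ) 1
    have hcont : ContinuousAt (fun x : ℝ => x ^ α) 1 :=
      Real.continuousAt_rpow_const 1 α (Or.inl one_ne_zero)
    have h7 := hcont.tendsto.comp h3
    simpa [Real.one_rpow, Function.comp_def] using h7
  have hmul := hD.mul hq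
  rw [mul_one] at hmul
  refine hmul.congr' ?_
  filter_upwards [eventually_ge_atTop 1] with n hn
  have hn0 : (0:ℝ) < (n:ℝ) := by
    have : 0 < n := hn
    exact_mod_cast this
  have hn1 : (0:ℝ) < (n:ℝ) + 1 := by linarith
  have hna : (0:ℝ) < (n:ℝ) ^ α := Real.rpow_pos_of_pos hn0 α
  have hn1a : (0:ℝ) < ((n:ℝ) + 1) ^ α := Real.rpow_pos_of_pos hn1 α
  show Stmt9.D α n / (n:ℝ) ^ α * (((n:ℝ) / ((n:ℝ) + 1)) ^ α)
      = ((n + 1 : ℕ) : ℝ) ^ (1 - α) * g α (n + 1)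
  rw [hg n, Real.div_rpow (le_of_lt hn0) (le_of_lt hn1)]
  push_cast
  have hr : ((n:ℝ) + 1) ^ (1 - α) = ((n:ℝ) + 1) / ((n:ℝ) + 1) ^ α := by
    rw [Real.rpow_sub hn1, Real.rpow_one]
  rw [hr]
  field_simp
end

section
/- Let {α_n}_{n≥1} ⊂ (0,1] with B := Σ_{n≥1} (1 − α_n) > 1. Then the function f whose k-th Taylor coefficient is the infinite product Π_{n≥1} g_k(α_n) is bounded on the unit disk. -/
open Set Filter


lemma g_mem {a : ℝ} (ha : a ∈ Set.Ioc (0:ℝ) 1) : ∀ k, 0 ≤ g a k ∧ g a k ≤ 1 := by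
  obtain ⟨ha0, ha1⟩ := ha
  have H : ∀ k, (0 ≤ g a k ∧ g a k ≤ 1) ∧ (0 ≤ g a (k+1) ∧ g a (k+1) ≤ 1) := by
    intro k
    induction k with
    | zero => refine ⟨⟨?_, ?_⟩, ?_, ?_⟩ <;> rw [g] <;> norm_num
    | succ n ih =>
      refine ⟨ih.2, ?_, ?_⟩ <;> rw [show n + 1 + 1 = n + 2 from rfl, g]
      · apply div_nonneg _ (by positivity)
        nlinarith [ih.1.1, ih.2.1, (Nat.cast_nonneg n : (0:ℝ) ≤ n)]
      · rw [div_le_one (by positivity)]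
        nlinarith [ih.1.1, ih.1.2, ih.2.1, ih.2.2, (Nat.cast_nonneg n : (0:ℝ) ≤ n)]
  exact fun k => (H k).1

noncomputable def cc (a : ℝ) (k : ℕ) : ℝ := ∏ j ∈ Finset.range k, (((j:ℝ) + a) / ((j:ℝ) + 1))

lemma cc_succ (a : ℝ) (k : ℕ) : cc a (k+1) = cc a k * (((k:ℝ) + a) / ((k:ℝ) + 1)) := by
  rw [cc, Finset.prod_range_succ]; rfl

lemma cc_pos {a : ℝ} (ha : 0 < a) (k : ℕ) : 0 < cc a k := by
  apply Finset.prod_pos; intro j _; positivity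

lemma mul_g_le_cc {a : ℝ} (ha : a ∈ Set.Ioc (0:ℝ) 1) : ∀ k, a * g a k ≤ cc a k := by
  obtain ⟨ha0, ha1⟩ := ha
  have H : ∀ k, a * g a k ≤ cc a k ∧ a * g a (k+1) ≤ cc a (k+1) := by
    intro k
    induction k with
    | zero =>
      constructor
      · rw [g]; simp [cc]
      · rw [g, cc_succ]; simp [cc]
    | succ n ih =>
      refine ⟨ih.2, ?_⟩
      rw [show n + 1 + 1 = n + 2 from rfl, g, cc_succ, cc_succ]
      have h1 := ih.1
      have h2 := ih.2
      have hc : 0 < cc a n := cc_pos ha0 n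
      have hn : (0:ℝ) ≤ n := Nat.cast_nonneg n
      push_cast
      rw [show (n:ℝ)+1+1 = (n:ℝ)+2 by ring, ← mul_div_assoc,
        div_le_iff₀ (by positivity : (0:ℝ) < (n:ℝ) + 2)]
      have key : (n:ℝ) * ((n:ℝ)+1) ≤ ((n:ℝ)+1-a) * ((n:ℝ)+a) := by nlinarith
      have hcc1 : cc a (n+1) = cc a n * (((n:ℝ) + a) / ((n:ℝ) + 1)) := cc_succ a n
      -- goal: a*((2*a*g a (n+1) + n * g a n)/(n+2)) * (n+2) ≤ cc a n * ((n+a)/(n+1)) * ((n+1+a)/(n+2)) * (n+2)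
      have hne : ((n:ℝ) + 2) ≠ 0 := by positivity
      have hne1 : ((n:ℝ) + 1) ≠ 0 := by positivity
      have hgnn : 0 ≤ g a n ∧ g a n ≤ 1 := g_mem ⟨ha0, ha1⟩ n
      -- reduce to: 2a * (a g_{n+1}) + n * (a g_n) ≤ (n+1+a) * cc a (n+1)
      have step : 2*a*(a * g a (n+1)) + (n:ℝ) * (a * g a n) ≤ ((n:ℝ)+1+a) * cc a (n+1) := by
        have t1 : 2*a*(a * g a (n+1)) ≤ 2*a*(cc a (n+1)) := by nlinarith
        have t2 : (n:ℝ) * (a * g a n) ≤ (n:ℝ) * cc a n := by nlinarith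
        have t3 : (n:ℝ) * cc a n ≤ ((n:ℝ)+1-a) * cc a (n+1) := by
          rw [hcc1, show ((n:ℝ)+1-a) * (cc a n * (((n:ℝ) + a) / ((n:ℝ) + 1)))
            = (((n:ℝ)+1-a) * ((n:ℝ)+a)) * cc a n / ((n:ℝ)+1) from by ring,
            le_div_iff₀ (by positivity : (0:ℝ) < (n:ℝ)+1)]
          nlinarith
        nlinarith
      calc a * (2*a * g a (n+1) + (n:ℝ) * g a n)
          = 2*a*(a * g a (n+1)) + (n:ℝ) * (a * g a n) := by ring
        _ ≤ ((n:ℝ)+1+a) * cc a (n+1) := step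
        _ = cc a n * (((n:ℝ) + a) / ((n:ℝ) + 1)) * (((n:ℝ)+1+a) / ((n:ℝ)+2)) * ((n:ℝ)+2) := by
              rw [← cc_succ a n]; field_simp
  exact fun k => (H k).1

lemma cc_le_rpow {a : ℝ} (ha : a ∈ Set.Ioc (0:ℝ) 1) (k : ℕ) :
    cc a k ≤ ((k:ℝ) + 1) ^ (a - 1) := by
  obtain ⟨ha0, ha1⟩ := ha
  induction k with
  | zero => simp [cc]
  | succ n ih =>
    have hm : (0:ℝ) < (n:ℝ)+1 := by positivity
    have hm2 : (0:ℝ) < (n:ℝ)+2 := by positivity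
    have hb := rpow_one_add_le_one_add_mul_self (s := 1/((n:ℝ)+1))
      (le_trans (by norm_num) (by positivity : (0:ℝ) ≤ 1/((n:ℝ)+1)))
      (by linarith : (0:ℝ) ≤ 1-a) (by linarith : 1-a ≤ 1)
    have factor : ((n:ℝ) + a) / ((n:ℝ) + 1) ≤ (((n:ℝ)+1)/((n:ℝ)+2)) ^ (1-a) := by
      have e1 : (1:ℝ)+1/((n:ℝ)+1) = ((n:ℝ)+2)/((n:ℝ)+1) := by field_simp; ring
      have h1 : (((n:ℝ)+1)/((n:ℝ)+2)) ^ (1-a) = ((1+1/((n:ℝ)+1)) ^ (1-a))⁻¹ := by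
        rw [e1, ← Real.inv_rpow (by positivity), inv_div]
      have e2 : (1:ℝ)+(1-a)*(1/((n:ℝ)+1)) = ((n:ℝ)+2-a)/((n:ℝ)+1) := by field_simp; ring
      have h2 : (1+(1-a)*(1/((n:ℝ)+1)))⁻¹ ≤ ((1+1/((n:ℝ)+1)) ^ (1-a))⁻¹ := by
        apply inv_anti₀ (by positivity) hb
      refine le_trans ?_ (h1 ▸ h2)
      rw [e2, inv_div, div_le_div_iff₀ hm (by linarith : (0:ℝ) < (n:ℝ)+2-a)]
      nlinarith
    have hne : ((n:ℝ)+1)^(1-a) ≠ 0 := (Real.rpow_pos_of_pos hm _).ne'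
    rw [show ((n+1:ℕ):ℝ)+1 = (n:ℝ)+2 by push_cast; ring]
    calc cc a (n+1) = cc a n * (((n:ℝ)+a)/((n:ℝ)+1)) := cc_succ a n
      _ ≤ ((n:ℝ)+1)^(a-1) * ((((n:ℝ)+1)/((n:ℝ)+2))^(1-a)) :=
          mul_le_mul ih factor (by positivity) (by positivity)
      _ = ((n:ℝ)+2)^(a-1) := by
          rw [show a-1 = -(1-a) by ring, Real.rpow_neg hm.le, Real.rpow_neg hm2.le,
            Real.div_rpow hm.le hm2.le]
          field_simp

lemma tprod_facts {f : ℕ → ℝ} (h0 : ∀ n, 0 ≤ f n) (h1 : ∀ n, f n ≤ 1) :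
    0 ≤ (∏' n, f n) ∧ ∀ F : Finset ℕ, (∏' n, f n) ≤ ∏ n ∈ F, f n := by
  have anti : Antitone (fun s : Finset ℕ => ∏ n ∈ s, f n) := by
    intro s t hst
    simp only
    rw [← Finset.prod_sdiff hst]
    exact mul_le_of_le_one_left (Finset.prod_nonneg fun i _ => h0 i)
      (Finset.prod_le_one (fun i _ => h0 i) (fun i _ => h1 i))
  have bdd : BddBelow (Set.range fun s : Finset ℕ => ∏ n ∈ s, f n) := by
    refine ⟨0, ?_⟩; rintro x ⟨s, rfl⟩; exact Finset.prod_nonneg fun i _ => h0 i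
  have hp : HasProd f (⨅ s : Finset ℕ, ∏ n ∈ s, f n) := tendsto_atTop_ciInf anti bdd
  rw [hp.tprod_eq]
  exact ⟨le_ciInf fun s => Finset.prod_nonneg fun i _ => h0 i, fun F => ciInf_le bdd F⟩

theorem stmt17 (α : ℕ → ℝ) (hα : ∀ n, α n ∈ Set.Ioc (0:ℝ) 1)
    (hB : 1 < ∑' n : ℕ, ENNReal.ofReal (1 - α n)) :
    ∃ M : ℝ, ∀ z ∈ Metric.ball (0:ℂ) 1,
      ‖∑' k : ℕ, ((∏' n : ℕ, g (α n) k : ℝ) : ℂ) * z ^ k‖ ≤ M := by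
  rw [ENNReal.tsum_eq_iSup_sum, lt_iSup_iff] at hB
  obtain ⟨F, hF⟩ := hB
  rw [← ENNReal.ofReal_sum_of_nonneg (fun i _ => by linarith [(hα i).2])] at hF
  have hB' : (1:ℝ) < ∑ n ∈ F, (1 - α n) := by
    by_contra h
    push_neg at h
    exact absurd hF (not_lt.2 ((ENNReal.ofReal_le_one).2 h))
  set B : ℝ := ∑ n ∈ F, (1 - α n) with hBdef
  set C : ℝ := ∏ n ∈ F, (α n)⁻¹ with hCdef
  have hC0 : 0 ≤ C := Finset.prod_nonneg fun i _ => (inv_nonneg).2 (hα i).1.le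
  have gb : ∀ k n, 0 ≤ g (α n) k ∧ g (α n) k ≤ 1 := fun k n => g_mem (hα n) k
  set Q : ℕ → ℝ := fun k => C * ((k:ℝ)+1) ^ (-B) with hQdef
  have hP0 : ∀ k, 0 ≤ ∏' n, g (α n) k := fun k =>
    (tprod_facts (fun n => (gb k n).1) (fun n => (gb k n).2)).1
  have hPQ : ∀ k, (∏' n, g (α n) k) ≤ Q k := by
    intro k
    have h1 : (∏' n, g (α n) k) ≤ ∏ n ∈ F, g (α n) k :=
      (tprod_facts (fun n => (gb k n).1) (fun n => (gb k n).2)).2 F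
    have h2 : ∏ n ∈ F, g (α n) k ≤ ∏ n ∈ F, ((α n)⁻¹ * (((k:ℝ)+1) ^ (α n - 1))) := by
      apply Finset.prod_le_prod (fun i _ => (gb k i).1)
      intro i _
      have hne : α i ≠ 0 := (hα i).1.ne'
      calc g (α i) k = (α i)⁻¹ * (α i * g (α i) k) := by field_simp
        _ ≤ (α i)⁻¹ * (((k:ℝ)+1) ^ (α i - 1)) :=
            mul_le_mul_of_nonneg_left
              (le_trans (mul_g_le_cc (hα i) k) (cc_le_rpow (hα i) k))
              (inv_nonneg.2 (hα i).1.le)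
    have h4 : ∏ n ∈ F, ((α n)⁻¹ * (((k:ℝ)+1) ^ (α n - 1))) = Q k := by
      rw [hQdef, Finset.prod_mul_distrib, ← Real.rpow_sum_of_pos
        (by positivity : (0:ℝ) < (k:ℝ)+1)]
      have : ∑ n ∈ F, (α n - 1) = -B := by
        rw [hBdef, ← Finset.sum_neg_distrib]
        exact Finset.sum_congr rfl (fun i _ => by ring)
      rw [this, hCdef]
    exact le_trans h1 (le_trans h2 (le_of_eq h4))
  have hQs : Summable Q := by
    apply Summable.mul_left
    have h5 : Summable (fun k : ℕ => ((k:ℝ)) ^ (-B)) :=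
      Real.summable_nat_rpow.2 (by linarith)
    have h6 := (summable_nat_add_iff 1).2 h5
    simpa using h6
  refine ⟨∑' k, Q k, fun z hz => ?_⟩
  have hz1 : ‖z‖ < 1 := by simpa [Metric.mem_ball] using hz
  have hz0 : (0:ℝ) ≤ ‖z‖ := norm_nonneg z
  have hnorm : ∀ k : ℕ, ‖((∏' n, g (α n) k : ℝ) : ℂ) * z ^ k‖
      = (∏' n, g (α n) k) * ‖z‖ ^ k := by
    intro k
    rw [norm_mul, Complex.norm_real, norm_pow, Real.norm_eq_abs, abs_of_nonneg (hP0 k)]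
  have hle : ∀ k : ℕ, (∏' n, g (α n) k) * ‖z‖ ^ k ≤ Q k := by
    intro k
    calc (∏' n, g (α n) k) * ‖z‖^k ≤ (∏' n, g (α n) k) * 1 :=
          mul_le_mul_of_nonneg_left (pow_le_one₀ hz0 hz1.le) (hP0 k)
      _ = ∏' n, g (α n) k := mul_one _
      _ ≤ Q k := hPQ k
  have hsum2 : Summable (fun k : ℕ => (∏' n, g (α n) k) * ‖z‖ ^ k) :=
    Summable.of_nonneg_of_le (fun k => mul_nonneg (hP0 k) (pow_nonneg hz0 k)) hle hQs
  have hsumn : Summable fun k : ℕ => ‖((∏' n, g (α n) k : ℝ) : ℂ) * z ^ k‖ := by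
    simpa only [hnorm] using hsum2
  calc ‖∑' k : ℕ, ((∏' n, g (α n) k : ℝ):ℂ) * z^k‖
      ≤ ∑' k : ℕ, ‖((∏' n, g (α n) k : ℝ):ℂ) * z^k‖ := norm_tsum_le_tsum_norm hsumn
    _ = ∑' k : ℕ, (∏' n, g (α n) k) * ‖z‖^k := tsum_congr hnorm
    _ ≤ ∑' k, Q k := Summable.tsum_le_tsum hle hsum2 hQs
end

section
/- The volume of the region {(α_1, …, α_n) ∈ [0,1]^n : α_1 + α_2 ≥ 1, α_1 + α_2 + α_3 ≥ 2, …, α_1 + ⋯ + α_n ≥ n−1} is 1/n!. -/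
open Set MeasureTheory Finset Pointwise

lemma simplex_measurable (n : ℕ) :
    MeasurableSet {x : Fin n → ℝ | (∀ i, 0 ≤ x i) ∧ ∑ i, x i ≤ 1} := by
  have h : {x : Fin n → ℝ | (∀ i, 0 ≤ x i) ∧ ∑ i, x i ≤ 1}
      = (⋂ i, {x : Fin n → ℝ | 0 ≤ x i}) ∩ {x : Fin n → ℝ | ∑ i, x i ≤ 1} := by
    ext x
    simp only [Set.mem_inter_iff, Set.mem_iInter, mem_setOf_eq]
  rw [h]
  apply MeasurableSet.inter
  · exact MeasurableSet.iInter fun i =>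
      measurableSet_le measurable_const (measurable_pi_apply i)
  · exact measurableSet_le
      (Finset.measurable_sum Finset.univ fun i _ => measurable_pi_apply i) measurable_const

lemma simplex_slice (n : ℕ) (c : ℝ) (hc : 0 ≤ c) :
    {y : Fin n → ℝ | (∀ i, 0 ≤ y i) ∧ ∑ i, y i ≤ c}
      = c • {y : Fin n → ℝ | (∀ i, 0 ≤ y i) ∧ ∑ i, y i ≤ 1} := by
  rcases eq_or_lt_of_le hc with rfl | hc
  · have h1 : {y : Fin n → ℝ | (∀ i, 0 ≤ y i) ∧ ∑ i, y i ≤ 0} = {0} := by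
      ext y
      simp only [mem_setOf_eq, mem_singleton_iff]
      constructor
      · rintro ⟨h1, h2⟩
        funext i
        have := (Finset.sum_eq_zero_iff_of_nonneg (fun j _ => h1 j)).1
          (le_antisymm h2 (Finset.sum_nonneg fun j _ => h1 j)) i (Finset.mem_univ i)
        simpa using this
      · rintro rfl; simp
    rw [h1, zero_smul_set ⟨0, by simp⟩, Set.singleton_zero]
  · ext y
    rw [Set.mem_smul_set_iff_inv_smul_mem₀ hc.ne']
    simp only [mem_setOf_eq, Pi.smul_apply, smul_eq_mul]
    constructor
    · rintro ⟨h1, h2⟩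
      refine ⟨fun i => mul_nonneg (inv_nonneg.2 hc.le) (h1 i), ?_⟩
      rw [← Finset.mul_sum, inv_mul_le_iff₀ hc, mul_one]
      exact h2
    · rintro ⟨h1, h2⟩
      rw [← Finset.mul_sum, inv_mul_le_iff₀ hc, mul_one] at h2
      refine ⟨fun i => ?_, h2⟩
      have := h1 i
      nlinarith [h1 i, inv_pos.2 hc]

lemma simplex_volume (n : ℕ) :
    volume {x : Fin n → ℝ | (∀ i, 0 ≤ x i) ∧ ∑ i, x i ≤ 1}
      = (n.factorial : ENNReal)⁻¹ := by
  induction n with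
  | zero =>
    have : {x : Fin 0 → ℝ | (∀ i, 0 ≤ x i) ∧ ∑ i, x i ≤ 1} = Set.univ := by
      ext x; simp
    rw [this]
    simp [MeasureTheory.volume_pi, Measure.pi_univ]
  | succ n ih =>
    set S : Set (Fin n → ℝ) := {x | (∀ i, 0 ≤ x i) ∧ ∑ i, x i ≤ 1} with hS
    set S' : Set (Fin (n+1) → ℝ) := {x | (∀ i, 0 ≤ x i) ∧ ∑ i, x i ≤ 1} with hS'
    set e := MeasurableEquiv.piFinSuccAbove (fun _ : Fin (n+1) => ℝ) 0 with he
    have hmp : MeasurePreserving e.symm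
        ((volume : Measure ℝ).prod (volume : Measure (Fin n → ℝ))) volume :=
      (volume_preserving_piFinSuccAbove (fun _ : Fin (n+1) => ℝ) 0).symm e
    have h1 : volume S' = ((volume : Measure ℝ).prod volume) (e.symm ⁻¹' S') :=
      (hmp.measure_preimage (simplex_measurable (n+1)).nullMeasurableSet).symm
    have hpre : e.symm ⁻¹' S' =
        {p : ℝ × (Fin n → ℝ) | (0 ≤ p.1 ∧ ∀ i, 0 ≤ p.2 i) ∧ p.1 + ∑ i, p.2 i ≤ 1} := by
      ext ⟨x, y⟩
      have hcons : e.symm (x, y) = Fin.cons x y := by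
        simp [he, MeasurableEquiv.piFinSuccAbove, Fin.insertNthEquiv]
      simp only [Set.mem_preimage, hcons, hS', mem_setOf_eq, Fin.sum_cons,
        Fin.forall_fin_succ, Fin.cons_zero, Fin.cons_succ]
      try tauto
    have hmeas : MeasurableSet
        {p : ℝ × (Fin n → ℝ) | (0 ≤ p.1 ∧ ∀ i, 0 ≤ p.2 i) ∧ p.1 + ∑ i, p.2 i ≤ 1} := by
      have h : {p : ℝ × (Fin n → ℝ) | (0 ≤ p.1 ∧ ∀ i, 0 ≤ p.2 i) ∧ p.1 + ∑ i, p.2 i ≤ 1}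
          = ({p : ℝ × (Fin n → ℝ) | 0 ≤ p.1} ∩ ⋂ i, {p : ℝ × (Fin n → ℝ) | 0 ≤ p.2 i})
            ∩ {p : ℝ × (Fin n → ℝ) | p.1 + ∑ i, p.2 i ≤ 1} := by
        ext p
        simp only [Set.mem_inter_iff, Set.mem_iInter, mem_setOf_eq]
      rw [h]
      apply MeasurableSet.inter
      · apply MeasurableSet.inter
        · exact measurableSet_le measurable_const measurable_fst
        · exact MeasurableSet.iInter fun i =>
            measurableSet_le measurable_const (measurable_snd.eval)
      · exact measurableSet_le
          (measurable_fst.add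
            (Finset.measurable_sum Finset.univ fun i _ => measurable_snd.eval))
          measurable_const
    rw [h1, hpre, Measure.prod_apply hmeas]
    have hslice : ∀ x : ℝ,
        (volume : Measure (Fin n → ℝ))
          (Prod.mk x ⁻¹' {p : ℝ × (Fin n → ℝ) |
            (0 ≤ p.1 ∧ ∀ i, 0 ≤ p.2 i) ∧ p.1 + ∑ i, p.2 i ≤ 1})
        = (Set.Icc (0:ℝ) 1).indicator
            (fun x => ENNReal.ofReal ((1 - x) ^ n) * (n.factorial : ENNReal)⁻¹) x := by
      intro x
      by_cases hx : x ∈ Set.Icc (0:ℝ) 1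
      · have hset : Prod.mk x ⁻¹' {p : ℝ × (Fin n → ℝ) |
            (0 ≤ p.1 ∧ ∀ i, 0 ≤ p.2 i) ∧ p.1 + ∑ i, p.2 i ≤ 1}
            = {y : Fin n → ℝ | (∀ i, 0 ≤ y i) ∧ ∑ i, y i ≤ 1 - x} := by
          ext y
          simp only [Set.mem_preimage, mem_setOf_eq]
          constructor
          · rintro ⟨⟨_, h2⟩, h3⟩; exact ⟨h2, by linarith⟩
          · rintro ⟨h2, h3⟩; exact ⟨⟨hx.1, h2⟩, by linarith⟩
        rw [Set.indicator_of_mem hx, hset, simplex_slice n (1 - x) (by linarith [hx.2]),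
          Measure.addHaar_smul_of_nonneg volume (by linarith [hx.2]), ← hS, ih]
        congr 2
        simp
      · rw [Set.indicator_of_notMem hx]
        have hset : Prod.mk x ⁻¹' {p : ℝ × (Fin n → ℝ) |
            (0 ≤ p.1 ∧ ∀ i, 0 ≤ p.2 i) ∧ p.1 + ∑ i, p.2 i ≤ 1} = ∅ := by
          ext y
          simp only [Set.mem_preimage, mem_setOf_eq, Set.mem_empty_iff_false, iff_false]
          rintro ⟨⟨h1', h2⟩, h3⟩
          rw [Set.mem_Icc, not_and_or] at hx
          rcases hx with hx | hx
          · exact hx h1'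
          · push_neg at hx
            have : (0:ℝ) ≤ ∑ i, y i := Finset.sum_nonneg fun j _ => h2 j
            linarith
        rw [hset, measure_empty]
    simp_rw [hslice]
    rw [lintegral_indicator measurableSet_Icc, lintegral_mul_const]
    · have hInt : IntegrableOn (fun x : ℝ => (1 - x) ^ n) (Set.Icc 0 1) volume := by
        apply Continuous.integrableOn_Icc
        fun_prop
      have hnn : 0 ≤ᵐ[volume.restrict (Set.Icc (0:ℝ) 1)] fun x : ℝ => (1 - x) ^ n := by
        filter_upwards [ae_restrict_mem measurableSet_Icc] with x hx
        exact pow_nonneg (by linarith [hx.2]) n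
      have hL : ∫⁻ x in Set.Icc (0:ℝ) 1, ENNReal.ofReal ((1 - x) ^ n)
          = ENNReal.ofReal (∫ x in Set.Icc (0:ℝ) 1, (1 - x) ^ n) :=
        (MeasureTheory.ofReal_integral_eq_lintegral_ofReal hInt hnn).symm
      have hI : ∫ x in Set.Icc (0:ℝ) 1, (1 - x) ^ n = 1 / (n + 1) := by
        rw [MeasureTheory.integral_Icc_eq_integral_Ioc,
          ← intervalIntegral.integral_of_le (zero_le_one)]
        have := intervalIntegral.integral_comp_sub_left (a := (0:ℝ)) (b := 1)
          (fun u => u ^ n) 1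
        simp only [sub_zero, sub_self] at this
        rw [this, integral_pow]
        ring
      rw [hL, hI]
      rw [one_div, ENNReal.ofReal_inv_of_pos (by positivity)]
      have : ENNReal.ofReal ((n:ℝ) + 1) = ((n:ENNReal) + 1) := by
        rw [ENNReal.ofReal_add (by positivity) zero_le_one, ENNReal.ofReal_natCast,
          ENNReal.ofReal_one]
      rw [this, Nat.factorial_succ, Nat.cast_mul, ENNReal.mul_inv (by simp) (by simp)]
      congr 1
      push_cast
      ring
    · exact ENNReal.measurable_ofReal.comp (by fun_prop)

lemma card_filter_lt (n k : ℕ) (h : k ≤ n) :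
    (Finset.univ.filter (fun i : Fin n => (i : ℕ) < k)).card = k := by
  have : (Finset.univ.filter (fun i : Fin n => (i : ℕ) < k))
      = Finset.map (Fin.castLEEmb h) Finset.univ := by
    ext i
    simp only [Finset.mem_filter, Finset.mem_univ, true_and, Finset.mem_map,
      Fin.castLEEmb_apply]
    constructor
    · intro hi; exact ⟨⟨i, hi⟩, rfl⟩
    · rintro ⟨j, rfl⟩; exact j.2
  rw [this, Finset.card_map, Finset.card_univ, Fintype.card_fin]

theorem stmt18 (n : ℕ) :
    MeasureTheory.volume
      {x : Fin n → ℝ | (∀ i, x i ∈ Set.Icc (0:ℝ) 1) ∧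
        ∀ k : ℕ, 2 ≤ k → k ≤ n →
          (k : ℝ) - 1 ≤ ∑ i ∈ Finset.univ.filter (fun i : Fin n => (i : ℕ) < k), x i}
      = (n.factorial : ENNReal)⁻¹ := by
  have hB : {y : Fin n → ℝ | (∀ i, 0 ≤ y i) ∧ ∑ i, y i ≤ 1}
      = {y : Fin n → ℝ | (∀ i, y i ∈ Set.Icc (0:ℝ) 1) ∧ ∑ i, y i ≤ 1} := by
    ext y
    simp only [mem_setOf_eq, Set.mem_Icc]
    constructor
    · rintro ⟨h1, h2⟩
      exact ⟨fun i => ⟨h1 i, le_trans (Finset.single_le_sum (fun j _ => h1 j)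
        (Finset.mem_univ i)) h2⟩, h2⟩
    · rintro ⟨h1, h2⟩
      exact ⟨fun i => (h1 i).1, h2⟩
  have hA : {x : Fin n → ℝ | (∀ i, x i ∈ Set.Icc (0:ℝ) 1) ∧
        ∀ k : ℕ, 2 ≤ k → k ≤ n →
          (k : ℝ) - 1 ≤ ∑ i ∈ Finset.univ.filter (fun i : Fin n => (i : ℕ) < k), x i}
      = (fun x : Fin n → ℝ => (fun _ => (1:ℝ)) - x) ⁻¹'
          {y : Fin n → ℝ | (∀ i, y i ∈ Set.Icc (0:ℝ) 1) ∧ ∑ i, y i ≤ 1} := by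
    ext x
    simp only [Set.mem_preimage, mem_setOf_eq, Pi.sub_apply, Set.mem_Icc]
    constructor
    · rintro ⟨h1, h2⟩
      refine ⟨fun i => ⟨by linarith [(h1 i).2], by linarith [(h1 i).1]⟩, ?_⟩
      have hsum : ∑ i : Fin n, (1 - x i) = n - ∑ i, x i := by
        rw [Finset.sum_sub_distrib, Finset.sum_const, Finset.card_univ, Fintype.card_fin,
          nsmul_eq_mul, mul_one]
      rw [hsum]
      by_cases hn : 2 ≤ n
      · have := h2 n hn le_rfl
        have hfull : (Finset.univ.filter (fun i : Fin n => (i : ℕ) < n)) = Finset.univ := by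
          apply Finset.filter_true_of_mem
          intro i _
          exact i.2
        rw [hfull] at this
        linarith
      · interval_cases n
        · simp
        · have := (h1 0).1
          simp only [Fin.sum_univ_one]
          push_cast
          linarith
    · rintro ⟨h1, h2⟩
      refine ⟨fun i => ⟨by linarith [(h1 i).2], by linarith [(h1 i).1]⟩, ?_⟩
      intro k hk2 hkn
      have hsub : ∑ i ∈ Finset.univ.filter (fun i : Fin n => (i : ℕ) < k), (1 - x i)
          ≤ ∑ i : Fin n, (1 - x i) :=
        Finset.sum_le_sum_of_subset_of_nonneg (Finset.subset_univ _)
          (fun i _ _ => (h1 i).1)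
      have hcard : ∑ i ∈ Finset.univ.filter (fun i : Fin n => (i : ℕ) < k), (1 - x i)
          = (k : ℝ) - ∑ i ∈ Finset.univ.filter (fun i : Fin n => (i : ℕ) < k), x i := by
        rw [Finset.sum_sub_distrib, Finset.sum_const, card_filter_lt n k hkn,
          nsmul_eq_mul, mul_one]
      linarith
  rw [hA]
  have hmeas : MeasurableSet {y : Fin n → ℝ | (∀ i, y i ∈ Set.Icc (0:ℝ) 1) ∧ ∑ i, y i ≤ 1} := by
    rw [← hB]
    exact simplex_measurable n
  rw [(Measure.measurePreserving_sub_left volume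
    (fun _ => (1:ℝ))).measure_preimage hmeas.nullMeasurableSet]
  rw [← hB]
  exact simplex_volume n
end
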